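/- arXiv:2302.05634 — 6 statements merged into one kernel-verified Lean document; each statement's English description precedes it below -/
import Mathlib

section
/- Suppose κ is an infinite cardinal, λ > κ is a regular cardinal, and for each α < λ we have |α^{<κ}| < λ. If 𝒜 is a collection of sets with |𝒜| ≥ λ and every member of 𝒜 has cardinality < κ, then there is a subcollection ℬ ⊆ 𝒜 with |ℬ| = λ forming a Δ-system, i.e. there is a set r such that the intersection of any two distinct members of ℬ equals r. -/
open Cardinal

namespace DeltaSystemAux

open Cardinal Set Order

universe u

noncomputable section

/-- rank of an element of `o.ToType` -/
def idx {o : Ordinal.{u}} (x : o.ToType) : Ordinal.{u} :=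
  (((Ordinal.ToType.mk (o := o))).symm x).1

theorem idx_lt {o : Ordinal.{u}} (x : o.ToType) : idx x < o :=
  (((Ordinal.ToType.mk (o := o))).symm x).2

/-- element of `o.ToType` with given rank -/
def enu {o : Ordinal.{u}} (a : Ordinal.{u}) (h : a < o) : o.ToType :=
  (Ordinal.ToType.mk (o := o)) ⟨a, h⟩

theorem idx_enu {o : Ordinal.{u}} (a : Ordinal.{u}) (h : a < o) : idx (enu a h) = a :=
  congrArg Subtype.val (((Ordinal.ToType.mk (o := o))).symm_apply_apply ⟨a, h⟩)

theorem enu_idx {o : Ordinal.{u}} (x : o.ToType) : enu (idx x) (idx_lt x) = x := by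
  have : (⟨idx x, idx_lt x⟩ : Set.Iio o) = ((Ordinal.ToType.mk (o := o))).symm x := rfl
  rw [enu, this, OrderIso.apply_symm_apply]

theorem idx_lt_idx {o : Ordinal.{u}} {x y : o.ToType} : idx x < idx y ↔ x < y := by
  rw [idx, idx, Subtype.coe_lt_coe, OrderIso.lt_iff_lt]

theorem idx_le_idx {o : Ordinal.{u}} {x y : o.ToType} : idx x ≤ idx y ↔ x ≤ y := by
  rw [idx, idx, Subtype.coe_le_coe, OrderIso.le_iff_le]

theorem idx_injective {o : Ordinal.{u}} : Function.Injective (idx (o := o)) := by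
  intro x y h
  exact le_antisymm (idx_le_idx.1 h.le) (idx_le_idx.1 h.ge)


variable {lam : Cardinal.{u}}

theorem card_Iio_lt (hreg : lam.IsRegular) (x : lam.ord.ToType) : #(Iio x) < lam := by
  have h : #(Iio x) ≤ #((idx x).ToType) := by
    refine ⟨⟨fun y => enu (idx y.1) ((idx_lt_idx (o := lam.ord)).2 y.2), ?_⟩⟩
    intro a b hab
    have := congrArg idx hab
    rw [idx_enu, idx_enu] at this
    exact Subtype.ext (idx_injective this)
  rw [Cardinal.mk_toType] at h
  exact h.trans_lt (Cardinal.lt_ord.1 (idx_lt x))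

theorem card_Iic_lt (hreg : lam.IsRegular) (x : lam.ord.ToType) : #(Iic x) < lam := by
  have : (Iic x : Set lam.ord.ToType) ⊆ insert x (Iio x) := by
    intro y hy
    rcases lt_or_eq_of_le (mem_Iic.1 hy) with h | h
    · exact Or.inr h
    · exact Or.inl h
  calc #(Iic x) ≤ #(insert x (Iio x) : Set _) := mk_le_mk_of_subset this
    _ ≤ #(Iio x) + 1 := mk_insert_le
    _ < lam := Cardinal.add_lt_of_lt hreg.aleph0_le (card_Iio_lt hreg x) (one_lt_aleph0.trans_le hreg.aleph0_le)

/-- bounding a small set -/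
theorem exists_bound (hreg : lam.IsRegular) (S : Set lam.ord.ToType) (hS : #S < lam) :
    ∃ b, ∀ y ∈ S, y ≤ b := by
  have hsup : (⨆ y : S, idx y.1) < lam.ord :=
    Cardinal.iSup_lt_ord_of_isRegular hreg hS fun y => idx_lt y.1
  refine ⟨enu _ hsup, fun y hy => ?_⟩
  rw [← idx_le_idx, idx_enu]
  exact le_ciSup (Ordinal.bddAbove_range _) (⟨y, hy⟩ : S)

theorem exists_strict_bound (hreg : lam.IsRegular) (S : Set lam.ord.ToType) (hS : #S < lam) :
    ∃ b, ∀ y ∈ S, y < b := by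
  obtain ⟨b, hb⟩ := exists_bound hreg S hS
  have h1 : succ (idx b) < lam.ord := (Cardinal.isSuccLimit_ord hreg.aleph0_le).succ_lt (idx_lt b)
  refine ⟨enu _ h1, fun y hy => ?_⟩
  have : idx y < succ (idx b) := (idx_le_idx.2 (hb y hy)).trans_lt (lt_succ _)
  rw [← idx_enu (succ (idx b)) h1] at this
  exact idx_lt_idx.1 this

theorem exists_above (hreg : lam.IsRegular) (S : Set lam.ord.ToType) (hS : lam ≤ #S)
    (b : lam.ord.ToType) : ∃ y ∈ S, b < y := by
  by_contra h
  push_neg at h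
  exact absurd (hS.trans (mk_le_mk_of_subset h)) (card_Iic_lt hreg b).not_ge

/-- pigeonhole: a map from a big type to a small type has a big fiber -/
theorem exists_big_fiber (hreg : lam.IsRegular) {ι β : Type u} (hι : lam ≤ #ι) (hβ : #β < lam)
    (F : ι → β) : ∃ b, lam ≤ #{i : ι // F i = b} := by
  by_contra h
  push_neg at h
  have := mk_congr (Equiv.sigmaFiberEquiv F).symm
  rw [mk_sigma] at this
  have hlt : (sum fun b => #{i : ι // F i = b}) < lam :=
    Cardinal.sum_lt_of_isRegular hreg hβ h
  exact absurd (hι.trans_eq this) hlt.not_ge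

theorem exists_closure_point (hreg : lam.IsRegular) {θ : Cardinal.{u}} (hθreg : θ.IsRegular)
    (hθ : θ < lam) (h : lam.ord.ToType → lam.ord.ToType) :
    ∃ x : lam.ord.ToType, (idx x).cof = θ ∧ ∀ y, y < x → h y < x := by
  have hΛlim : IsSuccLimit lam.ord := Cardinal.isSuccLimit_ord hreg.aleph0_le
  -- the sup-of-h-values function
  set ψ : Ordinal.{u} → Ordinal.{u} := fun ξ =>
    if hξ : ξ < lam.ord then ⨆ y : (Iic (enu ξ hξ) : Set lam.ord.ToType), idx (h y.1) else 0 with hψ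
  have hψlt : ∀ ξ, ξ < lam.ord → ψ ξ < lam.ord := by
    intro ξ hξ
    rw [hψ]
    simp only [dif_pos hξ]
    exact Cardinal.iSup_lt_ord_of_isRegular hreg (card_Iic_lt hreg _) fun y => idx_lt _
  have hψspec : ∀ (ξ) (hξ : ξ < lam.ord) (y : lam.ord.ToType), y ≤ enu ξ hξ → idx (h y) ≤ ψ ξ := by
    intro ξ hξ y hy
    rw [hψ]
    simp only [dif_pos hξ]
    exact le_ciSup (Ordinal.bddAbove_range _) (⟨y, hy⟩ : (Iic (enu ξ hξ) : Set lam.ord.ToType))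
  set Φ : Ordinal.{u} → Ordinal.{u} := fun ξ => (ψ ξ ⊔ ξ) + 1 with hΦ
  have hΦgt : ∀ ξ, ξ < Φ ξ := fun ξ =>
    (le_max_right _ _).trans_lt (lt_succ (ψ ξ ⊔ ξ))
  have hψltΦ : ∀ ξ, ψ ξ < Φ ξ := fun ξ =>
    (le_max_left _ _).trans_lt (lt_succ (ψ ξ ⊔ ξ))
  have hΦlt : ∀ ξ, ξ < lam.ord → Φ ξ < lam.ord := by
    intro ξ hξ
    exact hΛlim.succ_lt (max_lt (hψlt ξ hξ) hξ)
  -- the normal closure sequence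
  set c : Ordinal.{u} → Ordinal.{u} := fun i =>
    Ordinal.limitRecOn i 0 (fun _ IH => Φ IH) (fun o _ IH => Ordinal.bsup o IH) with hc
  have c_succ : ∀ i, c (succ i) = Φ (c i) := fun i => Ordinal.limitRecOn_succ _ _ _ _
  have c_limit : ∀ o, IsSuccLimit o → c o = Ordinal.bsup o (fun b _ => c b) := fun o ho =>
    Ordinal.limitRecOn_limit _ _ _ _ ho
  have c_mono : StrictMono c := by
    intro i j hij
    induction j using Ordinal.limitRecOn with
    | zero => exact absurd hij (not_lt_zero (a := i))
    | add_one k IHk =>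
      rw [Ordinal.add_one_eq_succ] at hij ⊢
      rcases lt_or_eq_of_le (lt_succ_iff.1 hij) with h' | h'
      · exact (IHk h').trans ((c_succ k) ▸ hΦgt (c k))
      · rw [h', c_succ]; exact hΦgt (c k)
    | limit o ho IH =>
      have h1 : c i < c (succ i) := (c_succ i) ▸ hΦgt (c i)
      have h2 : c (succ i) ≤ c o := by
        rw [c_limit o ho]
        exact Ordinal.le_bsup (fun b _ => c b) (succ i) (ho.succ_lt hij)
      exact h1.trans_le h2
  have c_normal : Order.IsNormal c := by
    rw [Order.isNormal_iff]
    refine ⟨c_mono, fun o ho a ha => ?_⟩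
    rw [c_limit o ho]
    exact Ordinal.bsup_le ha
  have c_lt : ∀ i, i ≤ θ.ord → c i < lam.ord := by
    intro i
    induction i using Ordinal.limitRecOn with
    | zero => intro _; rw [hc]; simpa using hΛlim.pos
    | add_one k IH =>
      intro hk
      rw [Ordinal.add_one_eq_succ] at hk ⊢
      rw [c_succ]
      exact hΦlt _ (IH ((le_succ k).trans hk))
    | limit o ho IH =>
      intro hk
      rw [c_limit o ho]
      refine Ordinal.bsup_lt_ord ?_ fun b hb => IH b hb (hb.le.trans hk)
      rw [hreg.cof_ord]
      calc o.card ≤ θ.ord.card := Ordinal.card_le_card hk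
        _ = θ := Cardinal.card_ord θ
        _ < lam := hθ
  have hθordlim : IsSuccLimit θ.ord := Cardinal.isSuccLimit_ord hθreg.aleph0_le
  have hα : c θ.ord < lam.ord := c_lt _ le_rfl
  refine ⟨enu (c θ.ord) hα, ?_, ?_⟩
  · rw [idx_enu, Ordinal.cof_map_of_isNormal c_normal hθordlim, hθreg.cof_ord]
  · intro y hy
    have h1 : idx y < c θ.ord := by
      rw [← idx_enu (c θ.ord) hα]
      exact idx_lt_idx.2 hy
    rw [c_limit _ hθordlim] at h1
    obtain ⟨i, hi, hlt⟩ := (Ordinal.lt_bsup _).1 h1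
    have hci : c i < lam.ord := c_lt i hi.le
    have hyle : y ≤ enu (c i) hci := by
      rw [← idx_le_idx, idx_enu]
      exact hlt.le
    have h2 : idx (h y) ≤ ψ (c i) := hψspec _ hci y hyle
    have h3 : ψ (c i) < c (succ i) := (c_succ i) ▸ hψltΦ (c i)
    have h4 : c (succ i) < c θ.ord := c_mono (hθordlim.succ_lt hi)
    have : idx (h y) < idx (enu (c θ.ord) hα) := by
      rw [idx_enu]
      exact h2.trans_lt (h3.trans h4)
    exact idx_lt_idx.1 this
/-- bounding a small subset of `Iio x` strictly below a point of uncountable cofinality -/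
theorem exists_bound_below (x : lam.ord.ToType) (hx : ℵ₀ ≤ (idx x).cof)
    (S : Set lam.ord.ToType) (hS : #(S ∩ Iio x : Set _) < (idx x).cof) :
    ∃ z, z < x ∧ ∀ y ∈ S, y < x → y ≤ z := by
  have hsup : (⨆ y : (S ∩ Iio x : Set _), idx y.1) < idx x :=
    Ordinal.iSup_lt_ord hS fun y => idx_lt_idx.2 y.2.2
  refine ⟨enu _ (hsup.trans (idx_lt x)), ?_, ?_⟩
  · rw [← idx_lt_idx, idx_enu]; exact hsup
  · intro y hy hyx
    rw [← idx_le_idx, idx_enu]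
    exact le_ciSup (Ordinal.bddAbove_range _) (⟨y, hy, hyx⟩ : (S ∩ Iio x : Set _))

/-- the replacement for Fodor's lemma -/
theorem exists_big_bounded (hreg : lam.IsRegular) {θ μ : Cardinal.{u}} (hθreg : θ.IsRegular)
    (hθ : θ < lam) (hμθ : μ < θ) (B : lam.ord.ToType → Set lam.ord.ToType)
    (hB : ∀ i, #(B i) ≤ μ) :
    ∃ β, lam ≤ #{x : lam.ord.ToType | (idx x).cof = θ ∧ B x ∩ Iio x ⊆ Iic β} := by
  by_contra hcon
  push_neg at hcon
  choose g hg using fun β =>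
    exists_strict_bound hreg {x | (idx x).cof = θ ∧ B x ∩ Iio x ⊆ Iic β} (hcon β)
  have hW : ∀ γ : lam.ord.ToType, #(insert γ (g '' Iic γ) : Set _) < lam := by
    intro γ
    calc #(insert γ (g '' Iic γ) : Set _) ≤ #(g '' Iic γ : Set _) + 1 := mk_insert_le
      _ < lam := Cardinal.add_lt_of_lt hreg.aleph0_le
          ((mk_image_le).trans_lt (card_Iic_lt hreg γ))
          (one_lt_aleph0.trans_le hreg.aleph0_le)
  choose h hh using fun γ => exists_strict_bound hreg _ (hW γ)
  obtain ⟨x, hxcof, hxcl⟩ := exists_closure_point hreg hθreg hθ h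
  have hbd : #(B x ∩ Iio x : Set _) < (idx x).cof := by
    rw [hxcof]
    exact ((mk_le_mk_of_subset inter_subset_left).trans (hB x)).trans_lt hμθ
  obtain ⟨z, hzx, hz⟩ := exists_bound_below x (hxcof ▸ hθreg.aleph0_le) (B x) hbd
  have hxmem : x ∈ {x' | (idx x').cof = θ ∧ B x' ∩ Iio x' ⊆ Iic z} :=
    ⟨hxcof, fun y hy => hz y hy.1 hy.2⟩
  have h1 : x < g z := hg z x hxmem
  have h2 : g z < h z := hh z (g z) (Or.inr ⟨z, Set.mem_Iic.2 le_rfl, rfl⟩)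
  have h3 : h z < x := hxcl z hzx
  exact absurd (h1.trans (h2.trans h3)) (lt_irrefl x)

/-- counting small subsets of a small set -/
theorem card_small_subsets (hreg : lam.IsRegular) {κ : Cardinal.{u}} (hκ : ℵ₀ ≤ κ) (hκlam : κ < lam)
    (hpow : ∀ a : Cardinal.{u}, a < lam → a ^< κ < lam) {μ : Cardinal.{u}} (hμ : μ < κ)
    (P : Set lam.ord.ToType) (hP : #P < lam) :
    #{t : Set lam.ord.ToType // t ⊆ P ∧ #t ≤ μ} < lam := by
  refine (Cardinal.mk_bounded_subset_le P μ).trans_lt ?_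
  refine ((le_powerlt _ hμ).trans_lt (hpow _ ?_))
  exact max_lt hP (hκ.trans_lt hκlam)

/-- transfinitely choose a `lam`-sized subfamily whose members are separated:
each chosen set lies entirely below all later-chosen indices. -/
theorem exists_separated (hreg : lam.IsRegular) {κ μ : Cardinal.{u}}
    (hκlam : κ < lam) (hμ : μ < κ)
    (B : lam.ord.ToType → Set lam.ord.ToType) (hB : ∀ i, #(B i) ≤ μ)
    (P : Set lam.ord.ToType) (hP : lam ≤ #P) :
    ∃ T ⊆ P, #T = lam ∧ ∀ x ∈ T, ∀ y ∈ T, x < y → B x ⊆ Iio y := by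
  haveI : Nonempty lam.ord.ToType := by
    rw [Ordinal.toType_nonempty_iff_ne_zero]
    exact (Cardinal.isSuccLimit_ord hreg.aleph0_le).pos.ne'
  classical
  set step : ∀ i : Ordinal.{u}, (∀ j, j < i → lam.ord.ToType) → lam.ord.ToType :=
    fun i IH =>
      if H : ∃ y, y ∈ P ∧ ∀ (j) (hj : j < i), IH j hj < y ∧ ∀ z ∈ B (IH j hj), z < y
      then H.choose else Classical.arbitrary _ with hstep
  set t : Ordinal.{u} → lam.ord.ToType := Ordinal.lt_wf.fix step with ht
  have ht_eq : ∀ i, t i = step i fun j _ => t j := fun i => Ordinal.lt_wf.fix_eq step i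
  have key : ∀ i, i < lam.ord →
      t i ∈ P ∧ ∀ (j) (hj : j < i), t j < t i ∧ ∀ z ∈ B (t j), z < t i := by
    intro i
    induction i using Ordinal.induction with
    | h i IH =>
      intro hi
      -- the set of already-used elements
      set W : Set lam.ord.ToType :=
        (range fun k : i.ToType => t (idx k)) ∪ ⋃ k : i.ToType, B (t (idx k)) with hW
      have hWcard : #W < lam := by
        have h1 : #(range fun k : i.ToType => t (idx k)) < lam :=
          mk_range_le.trans_lt (by rw [Cardinal.mk_toType]; exact Cardinal.lt_ord.1 hi)
        have h2 : #(⋃ k : i.ToType, B (t (idx k))) < lam := by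
          refine mk_iUnion_le_sum_mk.trans_lt ?_
          refine Cardinal.sum_lt_of_isRegular hreg
            (by rw [Cardinal.mk_toType]; exact Cardinal.lt_ord.1 hi) fun k => ?_
          exact (hB _).trans_lt (hμ.trans hκlam)
        exact (mk_union_le _ _).trans_lt (Cardinal.add_lt_of_lt hreg.aleph0_le h1 h2)
      obtain ⟨b, hb⟩ := exists_strict_bound hreg W hWcard
      obtain ⟨y, hyP, hby⟩ := exists_above hreg P hP b
      have hHyp : ∃ y, y ∈ P ∧ ∀ (j) (hj : j < i), t j < y ∧ ∀ z ∈ B (t j), z < y := by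
        refine ⟨y, hyP, fun j hj => ?_⟩
        have hjW : t j ∈ W := by
          left
          exact ⟨enu j hj, show t (idx (enu j hj)) = t j by rw [idx_enu]⟩
        have hBW : ∀ z ∈ B (t j), z ∈ W := by
          intro z hz
          right
          refine mem_iUnion.2 ⟨enu j hj, show z ∈ B (t (idx (enu j hj))) from ?_⟩
          rw [idx_enu]
          exact hz
        exact ⟨(hb _ hjW).trans hby, fun z hz => (hb _ (hBW z hz)).trans hby⟩
      have : t i = hHyp.choose := by rw [ht_eq i, hstep]; exact dif_pos hHyp
      rw [this]
      exact hHyp.choose_spec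
  refine ⟨range fun x : lam.ord.ToType => t (idx x), ?_, ?_, ?_⟩
  · rintro _ ⟨x, rfl⟩
    exact (key _ (idx_lt x)).1
  · rw [Cardinal.mk_range_eq _ ?_, Cardinal.mk_ord_toType]
    intro a b hab
    by_contra hne
    rcases lt_or_gt_of_ne (fun h : idx a = idx b => hne (idx_injective h)) with h | h
    · exact absurd hab (((key _ (idx_lt b)).2 _ h).1.ne)
    · exact absurd hab.symm (((key _ (idx_lt a)).2 _ h).1.ne)
  · rintro _ ⟨x, rfl⟩ _ ⟨y, rfl⟩ hxy z hz
    have hlt : idx x < idx y := by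
      rcases lt_trichotomy (idx x) (idx y) with h | h | h
      · exact h
      · exact absurd (congrArg t h) hxy.ne
      · exact absurd (((key _ (idx_lt x)).2 _ h).1) hxy.asymm
    exact ((key _ (idx_lt y)).2 _ hlt).2 z hz
theorem core (hreg : lam.IsRegular) {κ : Cardinal.{u}} (hκ : ℵ₀ ≤ κ) (hκlam : κ < lam)
    (hpow : ∀ a : Cardinal.{u}, a < lam → a ^< κ < lam) {μ : Cardinal.{u}} (hμ : μ < κ)
    (B : lam.ord.ToType → Set lam.ord.ToType) (hB : ∀ i, #(B i) ≤ μ) :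
    ∃ T : Set lam.ord.ToType, #T = lam ∧
      ∃ r, ∀ i ∈ T, ∀ j ∈ T, i ≠ j → B i ∩ B j = r := by
  classical
  -- choose a regular cardinal θ with μ < θ ≤ κ
  set θ : Cardinal.{u} := succ μ ⊔ ℵ₀ with hθdef
  have hθreg : θ.IsRegular := by
    rcases le_or_gt ℵ₀ μ with h | h
    · have : θ = succ μ := max_eq_left (h.trans (le_succ μ))
      rw [this]; exact isRegular_succ h
    · have : θ = ℵ₀ := max_eq_right (succ_le_of_lt h)
      rw [this]; exact isRegular_aleph0
  have hμθ : μ < θ := (lt_succ μ).trans_le (le_max_left _ _)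
  have hθκ : θ ≤ κ := by
    rcases le_or_gt ℵ₀ μ with h | h
    · exact max_le (succ_le_of_lt hμ) hκ
    · exact max_le ((succ_le_of_lt h).trans hκ) hκ
  have hθlam : θ < lam := hθκ.trans_lt hκlam
  -- find β bounding B x ∩ Iio x for λ-many x of cofinality θ
  obtain ⟨β, hS2⟩ := exists_big_bounded hreg hθreg hθlam hμθ B hB
  set S₂ : Set lam.ord.ToType :=
    {x | (idx x).cof = θ ∧ B x ∩ Iio x ⊆ Iic β} with hS2def
  -- pigeonhole the trace B x ∩ Iic β
  set D := {t : Set lam.ord.ToType // t ⊆ Iic β ∧ #t ≤ μ} with hDdef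
  have hD : #D < lam :=
    card_small_subsets hreg hκ hκlam hpow hμ (Iic β) (card_Iic_lt hreg β)
  set F : S₂ → D := fun x =>
    ⟨B x.1 ∩ Iic β, inter_subset_right,
      (mk_le_mk_of_subset inter_subset_left).trans (hB _)⟩ with hFdef
  obtain ⟨d, hd⟩ := exists_big_fiber hreg hS2 hD F
  set r₀ : Set lam.ord.ToType := d.1 with hr0
  -- the λ-sized family with constant trace, above β
  set P : Set lam.ord.ToType := {x | x ∈ S₂ ∧ B x ∩ Iic β = r₀ ∧ β < x} with hPdef
  have hP : lam ≤ #P := by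
    set P' : Set lam.ord.ToType := {x | x ∈ S₂ ∧ B x ∩ Iic β = r₀} with hP'def
    have h3 : lam ≤ #P' := by
      refine hd.trans (Cardinal.mk_le_of_injective
        (f := fun q : {i : S₂ // F i = d} => (⟨q.1.1, q.1.2, ?_⟩ : P')) ?_)
      · exact congrArg Subtype.val q.2
      · intro a b hab
        have h' : (a.1.1 : lam.ord.ToType) = b.1.1 := congrArg (fun q : P' => q.1) hab
        exact Subtype.ext (Subtype.ext h')
    by_contra hcon
    push_neg at hcon
    have hsub : P' ⊆ P ∪ Iic β := by
      intro x hx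
      rcases le_or_gt x β with h | h
      · exact Or.inr h
      · exact Or.inl ⟨hx.1, hx.2, h⟩
    have : #P' < lam := (mk_le_mk_of_subset hsub).trans_lt
      ((mk_union_le _ _).trans_lt
        (Cardinal.add_lt_of_lt hreg.aleph0_le hcon (card_Iic_lt hreg β)))
    exact absurd h3 this.not_ge
  -- on P, the trace below the own index is exactly r₀
  have hProot : ∀ x ∈ P, B x ∩ Iio x = r₀ ∧ r₀ ⊆ B x := by
    intro x hx
    obtain ⟨⟨-, hsub⟩, htrace, hβx⟩ := hx
    have h1 : B x ∩ Iio x ⊆ r₀ := fun z hz => htrace ▸ ⟨hz.1, hsub hz⟩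
    have h2 : r₀ ⊆ B x ∩ Iio x := by
      intro z hz
      rw [← htrace] at hz
      exact ⟨hz.1, lt_of_le_of_lt hz.2 hβx⟩
    exact ⟨h1.antisymm h2, fun z hz => (h2 hz).1⟩
  -- separate
  obtain ⟨T, hTP, hTcard, hTsep⟩ := exists_separated hreg hκlam hμ B hB P hP
  refine ⟨T, hTcard, r₀, ?_⟩
  have main : ∀ x ∈ T, ∀ y ∈ T, x < y → B x ∩ B y = r₀ := by
    intro x hx y hy hxy
    have hsep := hTsep x hx y hy hxy
    have hxP := hProot x (hTP hx)
    have hyP := hProot y (hTP hy)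
    apply subset_antisymm
    · intro z hz
      rw [← hyP.1]
      exact ⟨hz.2, hsep hz.1⟩
    · intro z hz
      exact ⟨hxP.2 hz, hyP.2 hz⟩
  intro i hi j hj hij
  rcases lt_or_gt_of_ne hij with h | h
  · exact main i hi j hj h
  · rw [inter_comm]; exact main j hj i hi h
end

end DeltaSystemAux

open DeltaSystemAux Set Order in
/-- **Δ-system lemma.** If `κ` is infinite, `λ > κ` is regular, `a ^< κ < λ` for all `a < λ`,
and `𝒜` is a family of at least `λ` many sets each of size `< κ`, then there is a
subfamily `ℬ ⊆ 𝒜` of size `λ` forming a Δ-system. -/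
theorem delta_system_lemma {α : Type u} (κ lam : Cardinal.{u}) (hκ : ℵ₀ ≤ κ)
    (hreg : lam.IsRegular) (hκlam : κ < lam)
    (hpow : ∀ a : Cardinal.{u}, a < lam → a ^< κ < lam)
    (𝒜 : Set (Set α)) (h𝒜 : lam ≤ #𝒜) (hsmall : ∀ x ∈ 𝒜, #x < κ) :
    ∃ ℬ ⊆ 𝒜, #ℬ = lam ∧ ∃ r : Set α, ∀ x ∈ ℬ, ∀ y ∈ ℬ, x ≠ y → x ∩ y = r := by
  classical
  -- enumerate λ many members of 𝒜
  obtain ⟨f⟩ : Nonempty (lam.ord.ToType ↪ ↥𝒜) := by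
    rw [← Cardinal.le_def, Cardinal.mk_ord_toType]; exact h𝒜
  set A : lam.ord.ToType → Set α := fun i => (f i).1 with hAdef
  have hAinj : Function.Injective A := fun a b hab => f.injective (Subtype.ext hab)
  have hA𝒜 : ∀ i, A i ∈ 𝒜 := fun i => (f i).2
  have hAsmall : ∀ i, #(A i) < κ := fun i => hsmall _ (hA𝒜 i)
  -- embed the union of the family into the index type
  set U : Set α := ⋃ i, A i with hUdef
  have hU : #U ≤ lam := by
    refine (mk_iUnion_le _).trans ?_
    rw [Cardinal.mk_ord_toType]
    calc lam * ⨆ i, #(A i) ≤ lam * κ :=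
          mul_le_mul' le_rfl (ciSup_le' fun i => (hAsmall i).le)
      _ = max lam κ := Cardinal.mul_eq_max hreg.aleph0_le hκ
      _ = lam := max_eq_left hκlam.le
  obtain ⟨g⟩ : Nonempty (↥U ↪ lam.ord.ToType) := by
    rw [← Cardinal.le_def, Cardinal.mk_ord_toType]; exact hU
  set B : lam.ord.ToType → Set lam.ord.ToType :=
    fun i => g '' (Subtype.val ⁻¹' (A i)) with hBdef
  have hBsmall : ∀ i, #(B i) < κ := fun i =>
    mk_image_le.trans_lt
      ((Cardinal.mk_preimage_of_injective _ _ Subtype.val_injective).trans_lt (hAsmall i))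
  -- uniformize the cardinalities of the `B i`
  set F : lam.ord.ToType → κ.ord.ToType :=
    fun i => (Ordinal.ToType.mk (o := κ.ord)) ⟨(#(B i)).ord, Cardinal.ord_lt_ord.2 (hBsmall i)⟩
    with hFdef
  obtain ⟨v, hv⟩ := exists_big_fiber hreg (by rw [Cardinal.mk_ord_toType]) 
    (by rw [Cardinal.mk_ord_toType]; exact hκlam) F
  set μ : Cardinal.{u} := (((Ordinal.ToType.mk (o := κ.ord))).symm v).1.card with hμdef
  have hμκ : μ < κ := Cardinal.lt_ord.1 (((Ordinal.ToType.mk (o := κ.ord))).symm v).2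
  have hfib : ∀ i : {i // F i = v}, #(B i.1) = μ := by
    intro ⟨i, hi⟩
    have : (⟨(#(B i)).ord, Cardinal.ord_lt_ord.2 (hBsmall i)⟩ : Iio κ.ord)
        = ((Ordinal.ToType.mk (o := κ.ord))).symm v := by
      rw [← hi]; exact (((Ordinal.ToType.mk (o := κ.ord))).symm_apply_apply _).symm
    have h2 : (#(B i)).ord = (((Ordinal.ToType.mk (o := κ.ord))).symm v).1 :=
      congrArg Subtype.val this
    rw [hμdef, ← h2, Cardinal.card_ord]
  obtain ⟨ψ⟩ : Nonempty (lam.ord.ToType ↪ {i // F i = v}) := by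
    rw [← Cardinal.le_def, Cardinal.mk_ord_toType]; exact hv
  set B' : lam.ord.ToType → Set lam.ord.ToType := fun a => B (ψ a).1 with hB'def
  obtain ⟨T', hT'card, r', hT'⟩ :=
    core hreg hκ hκlam hpow hμκ B' fun a => (hfib (ψ a)).le
  -- translate everything back
  set T : Set lam.ord.ToType := (fun a => (ψ a).1) '' T' with hTdef
  have hψinj : Function.Injective fun a => (ψ a).1 :=
    fun a b hab => ψ.injective (Subtype.ext hab)
  refine ⟨A '' T, ?_, ?_, Subtype.val '' (g ⁻¹' r'), ?_⟩
  · rintro _ ⟨i, -, rfl⟩; exact hA𝒜 i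
  · rw [mk_image_eq hAinj, hTdef, mk_image_eq hψinj, hT'card]
  · rintro _ ⟨i, hi, rfl⟩ _ ⟨j, hj, rfl⟩ hne
    obtain ⟨a, ha, rfl⟩ := hi
    obtain ⟨b, hb, rfl⟩ := hj
    have hab : a ≠ b := fun h => hne (by rw [h])
    have hBij : B (ψ a).1 ∩ B (ψ b).1 = r' := hT' a ha b hb hab
    have hpre : g ⁻¹' (B (ψ a).1 ∩ B (ψ b).1)
        = Subtype.val ⁻¹' (A (ψ a).1 ∩ A (ψ b).1) := by
      rw [preimage_inter, hBdef]
      rw [Set.preimage_image_eq _ g.injective, Set.preimage_image_eq _ g.injective,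
        preimage_inter]
    have hsub : A (ψ a).1 ∩ A (ψ b).1 ⊆ U :=
      fun z hz => Set.mem_iUnion.2 ⟨(ψ a).1, hz.1⟩
    calc A (ψ a).1 ∩ A (ψ b).1 = Subtype.val '' (Subtype.val ⁻¹' (A (ψ a).1 ∩ A (ψ b).1)) := by
          rw [Subtype.image_preimage_coe, inter_eq_right.2 hsub]
      _ = Subtype.val '' (g ⁻¹' (B (ψ a).1 ∩ B (ψ b).1)) :=
          congrArg (Set.image Subtype.val) hpre.symm
      _ = Subtype.val '' (g ⁻¹' r') :=
          congrArg (fun s => Subtype.val '' (g ⁻¹' s)) hBij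
end

section
/- Let γ₀ ≤ γ₁ be ordinals and let (p_α)_{α<γ₀} and (q_α)_{α<γ₁} be families of partial functions from λ to 2, each of size < κ. Suppose that (q_α)_{α<γ₁} forms a Δ-system, and for each α < β < γ₀ the pairs (p_α, p_β) and (q_α, q_β) are isomorphic, meaning the unique order isomorphism between dom(p_α) ∪ dom(p_β) and dom(q_α) ∪ dom(q_β) carries p_α to q_α and p_β to q_β. Then (p_α)_{α<γ₀} also forms a Δ-system. -/
open Cardinal

/-- The domain of a Cohen condition (a partial function into `2`). -/
def condDom {T : Type u} (p : T → Option (Fin 2)) : Set T := {x | p x ≠ none}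

/-- The graph of a Cohen condition, as a set of ordered pairs. -/
def condGraph {T : Type u} (p : T → Option (Fin 2)) : Set (T × Fin 2) :=
  {xb | p xb.1 = some xb.2}

/-- Two pairs of conditions are isomorphic: the (unique) order isomorphism between
`dom p₁ ∪ dom p₂` and `dom q₁ ∪ dom q₂` carries `p₁` to `q₁` and `p₂` to `q₂`. -/
def PairIso {T : Type u} [LinearOrder T] (p₁ p₂ q₁ q₂ : T → Option (Fin 2)) : Prop :=
  ∃ e : ↥(condDom p₁ ∪ condDom p₂) ≃o ↥(condDom q₁ ∪ condDom q₂),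
    ∀ x : ↥(condDom p₁ ∪ condDom p₂), p₁ x = q₁ (e x) ∧ p₂ x = q₂ (e x)

section Aux

variable {T : Type u} [LinearOrder T]

/-- Restriction of a pair isomorphism to the first components' domains. -/
noncomputable def restrictIso1 (p₁ p₂ q₁ q₂ : T → Option (Fin 2))
    (e : ↥(condDom p₁ ∪ condDom p₂) ≃o ↥(condDom q₁ ∪ condDom q₂))
    (h : ∀ x : ↥(condDom p₁ ∪ condDom p₂), p₁ x = q₁ (e x) ∧ p₂ x = q₂ (e x)) :
    ↥(condDom p₁) ≃o ↥(condDom q₁) where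
  toFun x := ⟨(e ⟨x.1, Or.inl x.2⟩).1, by
    have := (h ⟨x.1, Or.inl x.2⟩).1
    have hx := x.2
    simp only [condDom, Set.mem_setOf_eq] at hx ⊢
    exact fun hc => hx (this.trans hc)⟩
  invFun y := ⟨(e.symm ⟨y.1, Or.inl y.2⟩).1, by
    have := (h (e.symm ⟨y.1, Or.inl y.2⟩)).1
    rw [e.apply_symm_apply] at this
    have hy := y.2
    simp only [condDom, Set.mem_setOf_eq] at hy ⊢
    exact fun hc => hy (this.symm.trans hc)⟩
  left_inv x := by
    ext
    simp only
    have : (⟨(e ⟨x.1, Or.inl x.2⟩).1, Or.inl (by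
        have := (h ⟨x.1, Or.inl x.2⟩).1
        have hx := x.2
        simp only [condDom, Set.mem_setOf_eq] at hx ⊢
        exact fun hc => hx (this.trans hc))⟩ : ↥(condDom q₁ ∪ condDom q₂)) = e ⟨x.1, Or.inl x.2⟩ :=
      Subtype.ext rfl
    rw [this, e.symm_apply_apply]
  right_inv y := by
    ext
    simp only
    have : (⟨(e.symm ⟨y.1, Or.inl y.2⟩).1, Or.inl (by
        have := (h (e.symm ⟨y.1, Or.inl y.2⟩)).1
        rw [e.apply_symm_apply] at this
        have hy := y.2
        simp only [condDom, Set.mem_setOf_eq] at hy ⊢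
        exact fun hc => hy (this.symm.trans hc))⟩ : ↥(condDom p₁ ∪ condDom p₂)) = e.symm ⟨y.1, Or.inl y.2⟩ :=
      Subtype.ext rfl
    rw [this, e.apply_symm_apply]
  map_rel_iff' {x y} := by
    simp only [Equiv.coe_fn_mk, Subtype.mk_le_mk, ← Subtype.coe_le_coe (α := T)]
    rw [show ((e ⟨x.1, Or.inl x.2⟩ : ↥(condDom q₁ ∪ condDom q₂)) : T)
        ≤ (e ⟨y.1, Or.inl y.2⟩ : ↥(condDom q₁ ∪ condDom q₂))
        ↔ e ⟨x.1, Or.inl x.2⟩ ≤ e ⟨y.1, Or.inl y.2⟩ from Iff.rfl]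
    rw [e.le_iff_le]
    exact Iff.rfl

/-- Restriction of a pair isomorphism to the second components' domains. -/
noncomputable def restrictIso2 (p₁ p₂ q₁ q₂ : T → Option (Fin 2))
    (e : ↥(condDom p₁ ∪ condDom p₂) ≃o ↥(condDom q₁ ∪ condDom q₂))
    (h : ∀ x : ↥(condDom p₁ ∪ condDom p₂), p₁ x = q₁ (e x) ∧ p₂ x = q₂ (e x)) :
    ↥(condDom p₂) ≃o ↥(condDom q₂) where
  toFun x := ⟨(e ⟨x.1, Or.inr x.2⟩).1, by
    have := (h ⟨x.1, Or.inr x.2⟩).2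
    have hx := x.2
    simp only [condDom, Set.mem_setOf_eq] at hx ⊢
    exact fun hc => hx (this.trans hc)⟩
  invFun y := ⟨(e.symm ⟨y.1, Or.inr y.2⟩).1, by
    have := (h (e.symm ⟨y.1, Or.inr y.2⟩)).2
    rw [e.apply_symm_apply] at this
    have hy := y.2
    simp only [condDom, Set.mem_setOf_eq] at hy ⊢
    exact fun hc => hy (this.symm.trans hc)⟩
  left_inv x := by
    ext
    simp only
    have : (⟨(e ⟨x.1, Or.inr x.2⟩).1, Or.inr (by
        have := (h ⟨x.1, Or.inr x.2⟩).2
        have hx := x.2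
        simp only [condDom, Set.mem_setOf_eq] at hx ⊢
        exact fun hc => hx (this.trans hc))⟩ : ↥(condDom q₁ ∪ condDom q₂)) = e ⟨x.1, Or.inr x.2⟩ :=
      Subtype.ext rfl
    rw [this, e.symm_apply_apply]
  right_inv y := by
    ext
    simp only
    have : (⟨(e.symm ⟨y.1, Or.inr y.2⟩).1, Or.inr (by
        have := (h (e.symm ⟨y.1, Or.inr y.2⟩)).2
        rw [e.apply_symm_apply] at this
        have hy := y.2
        simp only [condDom, Set.mem_setOf_eq] at hy ⊢
        exact fun hc => hy (this.symm.trans hc))⟩ : ↥(condDom p₁ ∪ condDom p₂)) = e.symm ⟨y.1, Or.inr y.2⟩ :=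
      Subtype.ext rfl
    rw [this, e.apply_symm_apply]
  map_rel_iff' {x y} := by
    simp only [Equiv.coe_fn_mk, Subtype.mk_le_mk, ← Subtype.coe_le_coe (α := T)]
    rw [show ((e ⟨x.1, Or.inr x.2⟩ : ↥(condDom q₁ ∪ condDom q₂)) : T)
        ≤ (e ⟨y.1, Or.inr y.2⟩ : ↥(condDom q₁ ∪ condDom q₂))
        ↔ e ⟨x.1, Or.inr x.2⟩ ≤ e ⟨y.1, Or.inr y.2⟩ from Iff.rfl]
    rw [e.le_iff_le]
    exact Iff.rfl

end Aux

/-- If `(q_α)_{α<γ₁}` is a Δ-system of conditions in `Add(κ, λ)` and for all `α < β < γ₀ ≤ γ₁`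
the pair `(p_α, p_β)` is isomorphic to `(q_α, q_β)`, then `(p_α)_{α<γ₀}` is a Δ-system. -/
theorem delta_system_from_iso (κ lam : Cardinal.{u}) (γ₀ γ₁ : Ordinal.{u}) (hγ : γ₀ ≤ γ₁)
    (p q : Ordinal.{u} → lam.ord.ToType → Option (Fin 2))
    (hpsize : ∀ a, a < γ₀ → #(condDom (p a)) < κ)
    (hqsize : ∀ a, a < γ₁ → #(condDom (q a)) < κ)
    (hqΔ : ∃ r, ∀ a b, a < b → b < γ₁ → condGraph (q a) ∩ condGraph (q b) = r)
    (hiso : ∀ a b, a < b → b < γ₀ → PairIso (p a) (p b) (q a) (q b)) :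
    ∃ r, ∀ a b, a < b → b < γ₀ → condGraph (p a) ∩ condGraph (p b) = r := by
  obtain ⟨rq, hrq⟩ := hqΔ
  -- L1: same first index, subset version
  have L1sub : ∀ a b c, a < b → a < c → b < γ₀ → c < γ₀ →
      condGraph (p a) ∩ condGraph (p b) ⊆ condGraph (p a) ∩ condGraph (p c) := by
    intro a b c hab hac hb hc
    obtain ⟨e₁, h₁⟩ := hiso a b hab hb
    obtain ⟨e₂, h₂⟩ := hiso a c hac hc
    rintro ⟨x, v⟩ ⟨hxa, hxb⟩
    have hxa' : x ∈ condDom (p a) := by simp [condDom, condGraph] at hxa ⊢; simp [hxa]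
    set f₁ := restrictIso1 (p a) (p b) (q a) (q b) e₁ h₁
    set f₂ := restrictIso1 (p a) (p c) (q a) (q c) e₂ h₂
    have hff : f₁ = f₂ := Subsingleton.elim _ _
    -- the image point
    set y : lam.ord.ToType := (f₁ ⟨x, hxa'⟩).1 with hy
    have hqa : q a y = some v := by
      have := (h₁ ⟨x, Or.inl hxa'⟩).1
      rw [show q a y = q a (e₁ ⟨x, Or.inl hxa'⟩) from rfl, ← this]; exact hxa
    have hqb : q b y = some v := by
      have := (h₁ ⟨x, Or.inl hxa'⟩).2
      rw [show q b y = q b (e₁ ⟨x, Or.inl hxa'⟩) from rfl, ← this]; exact hxb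
    have hmem : (y, v) ∈ condGraph (q a) ∩ condGraph (q c) := by
      rw [hrq a c hac (lt_of_lt_of_le hc hγ), ← hrq a b hab (lt_of_lt_of_le hb hγ)]
      exact ⟨hqa, hqb⟩
    have hy2 : y = (f₂ ⟨x, hxa'⟩).1 := by rw [hy, hff]
    have hqc : q c y = some v := hmem.2
    refine ⟨hxa, ?_⟩
    have := (h₂ ⟨x, Or.inl hxa'⟩).2
    show p c x = some v
    rw [this, show q c (e₂ ⟨x, Or.inl hxa'⟩) = q c ((f₂ ⟨x, hxa'⟩).1) from rfl, ← hy2]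
    exact hqc
  have L1 : ∀ a b c, a < b → a < c → b < γ₀ → c < γ₀ →
      condGraph (p a) ∩ condGraph (p b) = condGraph (p a) ∩ condGraph (p c) := fun a b c hab hac hb hc =>
    le_antisymm (L1sub a b c hab hac hb hc) (L1sub a c b hac hab hc hb)
  -- L2: same second index, subset version
  have L2sub : ∀ a b c, a < b → c < b → a < γ₀ → c < γ₀ → b < γ₀ →
      condGraph (p a) ∩ condGraph (p b) ⊆ condGraph (p c) ∩ condGraph (p b) := by
    intro a b c hab hcb _ _ hb
    obtain ⟨e₁, h₁⟩ := hiso a b hab hb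
    obtain ⟨e₂, h₂⟩ := hiso c b hcb hb
    rintro ⟨x, v⟩ ⟨hxa, hxb⟩
    have hxb' : x ∈ condDom (p b) := by simp [condDom, condGraph] at hxb ⊢; simp [hxb]
    set f₁ := restrictIso2 (p a) (p b) (q a) (q b) e₁ h₁
    set f₂ := restrictIso2 (p c) (p b) (q c) (q b) e₂ h₂
    have hff : f₁ = f₂ := Subsingleton.elim _ _
    set y : lam.ord.ToType := (f₁ ⟨x, hxb'⟩).1 with hy
    have hqa : q a y = some v := by
      have := (h₁ ⟨x, Or.inr hxb'⟩).1
      rw [show q a y = q a (e₁ ⟨x, Or.inr hxb'⟩) from rfl, ← this]; exact hxa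
    have hqb : q b y = some v := by
      have := (h₁ ⟨x, Or.inr hxb'⟩).2
      rw [show q b y = q b (e₁ ⟨x, Or.inr hxb'⟩) from rfl, ← this]; exact hxb
    have hmem : (y, v) ∈ condGraph (q c) ∩ condGraph (q b) := by
      rw [hrq c b hcb (lt_of_lt_of_le hb hγ), ← hrq a b hab (lt_of_lt_of_le hb hγ)]
      exact ⟨hqa, hqb⟩
    have hy2 : y = (f₂ ⟨x, hxb'⟩).1 := by rw [hy, hff]
    refine ⟨?_, hxb⟩
    have := (h₂ ⟨x, Or.inr hxb'⟩).1
    show p c x = some v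
    rw [this, show q c (e₂ ⟨x, Or.inr hxb'⟩) = q c ((f₂ ⟨x, hxb'⟩).1) from rfl, ← hy2]
    exact hmem.1
  have L2 : ∀ a b c, a < b → c < b → a < γ₀ → c < γ₀ → b < γ₀ →
      condGraph (p a) ∩ condGraph (p b) = condGraph (p c) ∩ condGraph (p b) :=
    fun a b c hab hcb ha hc hb =>
    le_antisymm (L2sub a b c hab hcb ha hc hb) (L2sub c b a hcb hab hc ha hb)
  by_cases h1 : 1 < γ₀
  · refine ⟨condGraph (p 0) ∩ condGraph (p 1), ?_⟩
    intro a b hab hb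
    have h0 : (0 : Ordinal) < γ₀ := lt_trans zero_lt_one h1
    set M := max 1 b with hM
    have hMγ : M < γ₀ := max_lt h1 hb
    have h0M : (0 : Ordinal) < M := lt_of_lt_of_le zero_lt_one (le_max_left _ _)
    have haM : a < M := lt_of_lt_of_le hab (le_max_right _ _)
    have ha : a < γ₀ := lt_trans hab hb
    calc condGraph (p a) ∩ condGraph (p b)
        = condGraph (p a) ∩ condGraph (p M) := L1 a b M hab haM hb hMγ
      _ = condGraph (p 0) ∩ condGraph (p M) := L2 a M 0 haM h0M ha h0 hMγ
      _ = condGraph (p 0) ∩ condGraph (p 1) := L1 0 M 1 h0M zero_lt_one hMγ h1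
  · refine ⟨∅, ?_⟩
    intro a b hab hb
    exfalso
    push_neg at h1
    have : b < 1 := lt_of_lt_of_le hb h1
    have : b = 0 := Ordinal.lt_one_iff_zero.mp this
    exact absurd (this ▸ hab) (not_lt_of_ge (zero_le (a := a)))
end

section
/- For every infinite cardinal κ, the Dushnik–Miller relation κ → (κ, ω)² holds: for every coloring c : [κ]² → 2, either there is a set X ⊆ κ of cardinality κ with c constantly 0 on [X]², or there is an infinite set Y ⊆ κ with c constantly 1 on [Y]². -/
open Cardinal Set Ordinal

universe u

namespace DushnikMiller

variable {α : Type u}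

/-- The 1-colored neighborhood of `x`. -/
def Nbr (c : α → α → Fin 2) (x : α) : Set α := {y | y ≠ x ∧ c x y = 1}

lemma fin2_eq_zero {v : Fin 2} (h : v ≠ 1) : v = 0 := by
  revert h v; decide

lemma fin2_eq_one {v : Fin 2} (h : v ≠ 0) : v = 1 := by
  revert h v; decide

lemma eq_of_notMem_Nbr {c : α → α → Fin 2} {x y : α} (h : y ∉ Nbr c x) (hxy : y ≠ x) :
    c x y = 0 := by
  apply fin2_eq_zero
  intro h1
  exact h ⟨hxy, h1⟩

lemma succ_lt_of_not_isRegular {κ : Cardinal.{u}} (hκ : ℵ₀ ≤ κ) (hsing : ¬κ.IsRegular)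
    {m : Cardinal.{u}} (hm : m < κ) : Order.succ m < κ := by
  have haleph : ℵ₀ < κ := lt_of_le_of_ne hκ (by rintro rfl; exact hsing isRegular_aleph0)
  by_cases hm0 : ℵ₀ ≤ m
  · refine lt_of_le_of_ne (Order.succ_le_of_lt hm) ?_
    rintro h
    exact hsing (h ▸ isRegular_succ hm0)
  · exact lt_of_le_of_lt (Order.succ_le_of_lt (lt_of_not_ge hm0)) haleph

lemma eq_of_add_eq {μ a b : Cardinal.{u}} (hμ : ℵ₀ ≤ μ) (h : a + b = μ) (hb : b < μ) :
    a = μ := by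
  rcases lt_or_ge a μ with ha | ha
  · exact absurd h (Cardinal.add_lt_of_lt hμ ha hb).ne
  · exact le_antisymm (h ▸ self_le_add_right a b) ha

/-- Claim 1: if there is no infinite 1-homogeneous subset of `A`, then `A` has a full-size
subset in which every vertex has small 1-neighborhood. -/
lemma exists_small_degrees (c : α → α → Fin 2) (hsymm : ∀ x y, c x y = c y x)
    (ν : Cardinal.{u}) (hν : ℵ₀ ≤ ν) (A : Set α) (hA : #A = ν)
    (hno : ∀ Y : Set α, Y ⊆ A → Y.Infinite → ¬ ∀ x ∈ Y, ∀ y ∈ Y, x ≠ y → c x y = 1) :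
    ∃ B, B ⊆ A ∧ #B = ν ∧ ∀ x ∈ B, #↥(Nbr c x ∩ B) < ν := by
  by_contra hcon
  push_neg at hcon
  set T := {S : Set α // S ⊆ A ∧ #S = ν} with hT
  have key : ∀ S : T, ∃ x, x ∈ S.1 ∧ #↥(Nbr c x ∩ S.1) = ν := by
    intro S
    obtain ⟨x, hxS, hx⟩ := hcon S.1 S.2.1 S.2.2
    exact ⟨x, hxS,
      le_antisymm (le_trans (mk_le_mk_of_subset inter_subset_right) (le_of_eq S.2.2)) hx⟩
  choose pick hmem hcard using key
  let step : T → T := fun S => ⟨Nbr c (pick S) ∩ S.1, inter_subset_right.trans S.2.1, hcard S⟩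
  let seq : ℕ → T := fun n => step^[n] ⟨A, subset_rfl, hA⟩
  have hseq : ∀ n, seq (n + 1) = step (seq n) := fun n => Function.iterate_succ_apply' _ _ _
  let xs : ℕ → α := fun n => pick (seq n)
  have hxmem : ∀ n, xs n ∈ (seq n).1 := fun n => hmem (seq n)
  have hstep_sub : ∀ n, (seq (n+1)).1 ⊆ (seq n).1 := by
    intro n; rw [hseq n]; exact inter_subset_right
  have hsub : ∀ n m, n ≤ m → (seq m).1 ⊆ (seq n).1 := by
    intro n m h
    induction m with
    | zero => simp_all
    | succ m ih =>
      rcases Nat.lt_or_ge n (m+1) with h' | h'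
      · exact (hstep_sub m).trans (ih (Nat.lt_succ_iff.1 h'))
      · have : n = m + 1 := le_antisymm h h'
        subst this; exact subset_rfl
  have hadj : ∀ n m, n < m → xs m ∈ Nbr c (xs n) := by
    intro n m h
    have h1 : xs m ∈ (seq m).1 := hxmem m
    have h2 : (seq m).1 ⊆ (seq (n+1)).1 := hsub (n+1) m h
    have h3 : (seq (n+1)).1 = Nbr c (xs n) ∩ (seq n).1 := by rw [hseq n]
    have := h2 h1
    rw [h3] at this
    exact this.1
  have hinj : Function.Injective xs := by
    intro n m h
    by_contra hne
    rcases Nat.lt_or_ge n m with h' | h'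
    · exact (hadj n m h').1 h.symm
    · exact (hadj m n (lt_of_le_of_ne h' (Ne.symm hne))).1 h
  refine hno (Set.range xs) ?_ (Set.infinite_range_of_injective hinj) ?_
  · rintro _ ⟨n, rfl⟩
    exact (seq n).2.1 (hxmem n)
  · rintro _ ⟨n, rfl⟩ _ ⟨m, rfl⟩ hne
    rcases Nat.lt_or_ge n m with h' | h'
    · exact (hadj n m h').2
    · have hmn : m < n := lt_of_le_of_ne h' (fun h => hne (congrArg xs h.symm))
      rw [hsymm]
      exact (hadj m n hmn).2

/-- Zorn step: regular `μ`, all degrees small inside `B` gives a full independent subset. -/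
lemma indep_of_small_degrees (c : α → α → Fin 2) (hsymm : ∀ x y, c x y = c y x)
    {μ : Cardinal.{u}} (hreg : μ.IsRegular) (B : Set α) (hB : #B = μ)
    (hdeg : ∀ x ∈ B, #↥(Nbr c x ∩ B) < μ) :
    ∃ X, X ⊆ B ∧ #X = μ ∧ ∀ x ∈ X, ∀ y ∈ X, x ≠ y → c x y = 0 := by
  set S : Set (Set α) := {X | X ⊆ B ∧ ∀ x ∈ X, ∀ y ∈ X, x ≠ y → c x y = 0} with hS
  have hchain : ∀ C ⊆ S, IsChain (· ⊆ ·) C → ∃ ub ∈ S, ∀ s ∈ C, s ⊆ ub := by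
    intro C hCS hchain
    refine ⟨⋃₀ C, ⟨?_, ?_⟩, fun s hs => subset_sUnion_of_mem hs⟩
    · exact sUnion_subset fun s hs => (hCS hs).1
    · rintro x ⟨s, hsC, hxs⟩ y ⟨t, htC, hyt⟩ hne
      rcases eq_or_ne s t with rfl | hst
      · exact (hCS hsC).2 x hxs y hyt hne
      · rcases hchain hsC htC hst with h | h
        · exact (hCS htC).2 x (h hxs) y hyt hne
        · exact (hCS hsC).2 x hxs y (h hyt) hne
  obtain ⟨X, hmax⟩ := zorn_subset S hchain
  obtain ⟨hXB, hXind⟩ := hmax.prop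
  refine ⟨X, hXB, ?_, hXind⟩
  have hXle : #X ≤ μ := hB ▸ mk_le_mk_of_subset hXB
  refine le_antisymm hXle (le_of_not_gt fun hlt => ?_)
  have cover : B ⊆ X ∪ ⋃ x : X, (Nbr c x.1 ∩ B) := by
    intro y hy
    by_cases hyX : y ∈ X
    · exact Or.inl hyX
    · have hins : insert y X ∉ S := by
        intro hins
        exact hyX (hmax.2 hins (subset_insert y X) (mem_insert y X))
      have hni : ¬ ∀ a ∈ insert y X, ∀ b ∈ insert y X, a ≠ b → c a b = 0 := by
        intro hind
        exact hins ⟨insert_subset hy hXB, hind⟩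
      push_neg at hni
      obtain ⟨a, ha, b, hb, hab, hcab⟩ := hni
      -- produce x ∈ X with y ∈ Nbr c x
      have : ∃ x ∈ X, y ∈ Nbr c x := by
        rcases mem_insert_iff.1 ha with rfl | haX
        · rcases mem_insert_iff.1 hb with rfl | hbX
          · exact absurd rfl hab
          · -- a = y, b ∈ X : c y b ≠ 0
            refine ⟨b, hbX, hab, ?_⟩
            rw [hsymm]
            exact fin2_eq_one hcab
        · rcases mem_insert_iff.1 hb with rfl | hbX
          · exact ⟨a, haX, Ne.symm hab, fin2_eq_one hcab⟩
          · exact absurd (hXind a haX b hbX hab) hcab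
      obtain ⟨x, hxX, hyN⟩ := this
      exact Or.inr (mem_iUnion.2 ⟨⟨x, hxX⟩, hyN, hy⟩)
  have hle : μ ≤ #X + #(⋃ x : X, (Nbr c x.1 ∩ B)) :=
    hB ▸ (mk_le_mk_of_subset cover).trans (mk_union_le _ _)
  have hsup : (⨆ x : X, #↥(Nbr c x.1 ∩ B)) < μ :=
    iSup_lt_of_isRegular hreg hlt fun x => hdeg x.1 (hXB x.2)
  have hU : #(⋃ x : X, (Nbr c x.1 ∩ B)) < μ :=
    lt_of_le_of_lt (mk_iUnion_le _) (mul_lt_of_lt hreg.1 hlt hsup)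
  exact absurd hle (not_le.2 (Cardinal.add_lt_of_lt hreg.1 hlt hU))

/-- Regular case of Dushnik–Miller. -/
lemma regular_case (c : α → α → Fin 2) (hsymm : ∀ x y, c x y = c y x)
    {μ : Cardinal.{u}} (hreg : μ.IsRegular) (A : Set α) (hA : #A = μ)
    (hno : ∀ Y : Set α, Y ⊆ A → Y.Infinite → ¬ ∀ x ∈ Y, ∀ y ∈ Y, x ≠ y → c x y = 1) :
    ∃ X, X ⊆ A ∧ #X = μ ∧ ∀ x ∈ X, ∀ y ∈ X, x ≠ y → c x y = 0 := by
  obtain ⟨B, hBA, hB, hdeg⟩ := exists_small_degrees c hsymm μ hreg.1 A hA hno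
  obtain ⟨X, hXB, hX, hXind⟩ := indep_of_small_degrees c hsymm hreg B hB hdeg
  exact ⟨X, hXB.trans hBA, hX, hXind⟩

/-- A cofinal family of cardinals below `κ`, indexed by a type of size `cof κ.ord`. -/
lemma exists_cofinal_family (κ : Cardinal.{u}) (hκ : ℵ₀ ≤ κ) (hsing : ¬κ.IsRegular) :
    ∃ θ : (κ.ord.cof.ord).ToType → Cardinal.{u},
      (∀ i, θ i < κ) ∧ ∀ m < κ, ∃ i, m < θ i := by
  set lc := κ.ord.cof with hlc
  set ι := lc.ord.ToType with hiota
  have hι : #ι = lc := by rw [hiota, mk_toType, card_ord]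
  let r : κ.ord.ToType → κ.ord.ToType → Prop := (· < ·)
  have hrtype : type r = κ.ord := type_toType _
  obtain ⟨S, hSunb, hScard⟩ := Order.exists_cof_eq κ.ord.ToType
  have hScard' : #S = lc := by rw [hScard, cof_toType]
  have e : ι ≃ S := Classical.choice (Cardinal.eq.1 (hι.trans hScard'.symm))
  refine ⟨fun i => (typein r (e i).1).card, fun i => ?_, fun m hm => ?_⟩
  · have := typein_lt_type r (e i).1
    rw [hrtype] at this
    exact Cardinal.lt_ord.1 this
  · have hsm : Order.succ m < κ := succ_lt_of_not_isRegular hκ hsing hm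
    have hord : (Order.succ m).ord < type r := by
      rw [hrtype]
      exact Cardinal.ord_lt_ord.2 hsm
    obtain ⟨x, hx⟩ := typein_surj r hord
    obtain ⟨s, hsS, hsx⟩ := hSunb x
    refine ⟨e.symm ⟨s, hsS⟩, ?_⟩
    have h1 : typein r x ≤ typein r s := (typein_le_typein r).2 (not_lt.2 hsx)
    have h2 : Order.succ m ≤ (typein r s).card := by
      calc Order.succ m = ((Order.succ m).ord).card := (card_ord _).symm
        _ ≤ _ := card_le_card (hx ▸ h1)
    have h3 : (e (e.symm ⟨s, hsS⟩)).1 = s := by rw [e.apply_symm_apply]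
    show m < (typein r (e (e.symm ⟨s, hsS⟩)).1).card
    rw [h3]
    exact lt_of_lt_of_le (Order.lt_succ m) h2

/-- Singular case of Dushnik–Miller. -/
lemma singular_case (c : α → α → Fin 2) (hsymm : ∀ x y, c x y = c y x)
    (κ : Cardinal.{u}) (hκ : ℵ₀ ≤ κ) (hα : #α = κ) (hsing : ¬κ.IsRegular)
    (hno : ∀ Y : Set α, Y.Infinite → ¬ ∀ x ∈ Y, ∀ y ∈ Y, x ≠ y → c x y = 1) :
    ∃ X : Set α, #X = κ ∧ ∀ x ∈ X, ∀ y ∈ X, x ≠ y → c x y = 0 := by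
  have hlcinf : ℵ₀ ≤ κ.ord.cof := aleph0_le_cof.2 (isSuccLimit_ord hκ)
  have hlcκ : κ.ord.cof < κ := lt_of_le_of_ne (cof_ord_le κ) fun h => hsing ⟨hκ, h.ge⟩
  set lc := κ.ord.cof with hlc
  obtain ⟨A, hAu, hA, hdegA⟩ := exists_small_degrees c hsymm κ hκ univ (by rw [mk_univ, hα])
    (fun Y _ hinf => hno Y hinf)
  set ι := lc.ord.ToType with hiota
  have hι : #ι = lc := by rw [hiota, mk_toType, card_ord]
  have hιne : Nonempty ι := by
    refine toType_nonempty_iff_ne_zero.2 ?_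
    have : (0 : Ordinal) < lc.ord := Cardinal.lt_ord.2 (by
      rw [Ordinal.card_zero]; exact lt_of_lt_of_le aleph0_pos hlcinf)
    exact this.ne'
  obtain ⟨θ, hθκ, hθcof⟩ := exists_cofinal_family κ hκ hsing
  -- the pipeline producing independent sets with uniformly bounded degrees
  have pipeline : ∀ m : Cardinal.{u}, ∃ (D : Set α) (t : Cardinal.{u}),
      m.IsRegular → lc < m → m < κ →
        D ⊆ A ∧ #D = m ∧ (∀ x ∈ D, ∀ y ∈ D, x ≠ y → c x y = 0) ∧ t < κ ∧
          ∀ x ∈ D, #↥(Nbr c x ∩ A) ≤ t := by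
    intro m
    by_cases H : m.IsRegular ∧ lc < m ∧ m < κ
    · obtain ⟨hreg, hlcm, hmκ⟩ := H
      obtain ⟨E, hEA, hE⟩ := Cardinal.le_mk_iff_exists_subset.1
        (show m ≤ #A by rw [hA]; exact hmκ.le)
      obtain ⟨B, hBE, hB, hBind⟩ := regular_case c hsymm hreg E hE
        (fun Y hY hinf => hno Y hinf)
      have hγex : ∀ x : α, ∃ i : ι, x ∈ A → #↥(Nbr c x ∩ A) < θ i := by
        intro x
        by_cases hx : x ∈ A
        · obtain ⟨i, hi⟩ := hθcof _ (hdegA x hx)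
          exact ⟨i, fun _ => hi⟩
        · exact ⟨Classical.arbitrary ι, fun h => absurd h hx⟩
      choose γ hγ using hγex
      have hfib : ∃ i₀ : ι, #↥(B ∩ γ ⁻¹' {i₀}) = m := by
        by_contra h
        push_neg at h
        have hcov : B ⊆ ⋃ i : ι, (B ∩ γ ⁻¹' {i}) := fun x hx => mem_iUnion.2 ⟨γ x, hx, rfl⟩
        have hlem : m ≤ #ι * ⨆ i : ι, #↥(B ∩ γ ⁻¹' {i}) := by
          rw [← hB]
          exact (mk_le_mk_of_subset hcov).trans (mk_iUnion_le _)
        have hιm : #ι < m := by rw [hι]; exact hlcm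
        have hsup : (⨆ i : ι, #↥(B ∩ γ ⁻¹' {i})) < m :=
          iSup_lt_of_isRegular hreg hιm fun i =>
            lt_of_le_of_ne (le_of_le_of_eq (mk_le_mk_of_subset inter_subset_left) hB) (h i)
        exact absurd hlem (not_le.2 (mul_lt_of_lt hreg.1 hιm hsup))
      obtain ⟨i₀, hfibm⟩ := hfib
      refine ⟨B ∩ γ ⁻¹' {i₀}, θ i₀, fun _ _ _ =>
        ⟨inter_subset_left.trans (hBE.trans hEA), hfibm,
          fun x hx y hy => hBind x hx.1 y hy.1, hθκ i₀, ?_⟩⟩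
      rintro x ⟨hxB, hxγ⟩
      have hxA : x ∈ A := (hBE.trans hEA) hxB
      rw [mem_preimage, mem_singleton_iff] at hxγ
      rw [← hxγ]
      exact (hγ x hxA).le
    · exact ⟨∅, 0, fun h1 h2 h3 => absurd ⟨h1, h2, h3⟩ H⟩
  choose Df tf hpipe using pipeline
  -- the transfinite recursion producing the strictly increasing cardinals
  have wf : WellFounded ((· < ·) : ι → ι → Prop) := wellFounded_lt
  set μ : ι → Cardinal.{u} := wf.fix (fun i rec =>
    Order.succ (lc ⊔ θ i ⊔ ⨆ j : Iio i, (rec j.1 j.2 ⊔ tf (rec j.1 j.2)))) with hμset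
  have hμdef : ∀ i : ι,
      μ i = Order.succ (lc ⊔ θ i ⊔ ⨆ j : Iio i, (μ j.1 ⊔ tf (μ j.1))) := by
    intro i
    exact WellFounded.fix_eq wf _ i
  have hμreg : ∀ i, (μ i).IsRegular := by
    intro i; rw [hμdef i]
    exact isRegular_succ (hlcinf.trans (le_sup_left.trans le_sup_left))
  have hμinf : ∀ i, ℵ₀ ≤ μ i := fun i => (hμreg i).1
  have hμgt : ∀ i, lc ⊔ θ i ⊔ (⨆ j : Iio i, (μ j.1 ⊔ tf (μ j.1))) < μ i := by
    intro i; rw [hμdef i]; exact Order.lt_succ _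
  have hμlc : ∀ i, lc < μ i := fun i =>
    lt_of_le_of_lt (le_sup_left.trans le_sup_left) (hμgt i)
  have hμθ : ∀ i, θ i < μ i := fun i =>
    lt_of_le_of_lt (le_sup_right.trans le_sup_left) (hμgt i)
  have hμκ : ∀ i, μ i < κ := by
    intro i
    refine wf.induction (C := fun i => μ i < κ) i ?_
    intro i IH
    rw [hμdef i]
    apply succ_lt_of_not_isRegular hκ hsing
    have hsupκ : (⨆ j : Iio i, (μ j.1 ⊔ tf (μ j.1))) < κ := by
      refine Ordinal.iSup_lt (mk_Iio_ord_toType i) ?_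
      rintro ⟨j, hj⟩
      have hj' := IH j hj
      exact sup_lt_iff.2 ⟨hj', (hpipe (μ j) (hμreg j) (hμlc j) hj').2.2.2.1⟩
    exact sup_lt_iff.2 ⟨sup_lt_iff.2 ⟨hlcκ, hθκ i⟩, hsupκ⟩
  have hμmono : ∀ {j i : ι}, j < i → μ j ⊔ tf (μ j) < μ i := by
    intro j i hji
    have h1 : μ j ⊔ tf (μ j) ≤ ⨆ j' : Iio i, (μ j'.1 ⊔ tf (μ j'.1)) :=
      le_ciSup (Cardinal.bddAbove_range _) (⟨j, hji⟩ : Iio i)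
    exact lt_of_le_of_lt (h1.trans le_sup_right) (hμgt i)
  have hDp : ∀ i : ι, Df (μ i) ⊆ A ∧ #(Df (μ i)) = μ i ∧
      (∀ x ∈ Df (μ i), ∀ y ∈ Df (μ i), x ≠ y → c x y = 0) ∧ tf (μ i) < κ ∧
      ∀ x ∈ Df (μ i), #↥(Nbr c x ∩ A) ≤ tf (μ i) :=
    fun i => hpipe (μ i) (hμreg i) (hμlc i) (hμκ i)
  set D : ι → Set α := fun i => Df (μ i) with hD
  set C : ι → Set α := fun i => D i \ ⋃ j : Iio i, ⋃ x ∈ D j.1, Nbr c x with hCset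
  have hCcard : ∀ i, #(C i) = μ i := by
    intro i
    set R := (⋃ j : Iio i, ⋃ x ∈ D j.1, Nbr c x) ∩ D i with hR
    have hCeq : C i = D i \ R := (diff_inter_self_eq_diff).symm
    have hRsub : R ⊆ ⋃ j : Iio i, ⋃ x : ↥(D j.1), (Nbr c x.1 ∩ D i) := by
      rintro y ⟨hyU, hyD⟩
      obtain ⟨j, hj⟩ := mem_iUnion.1 hyU
      obtain ⟨x, hx, hyN⟩ := mem_iUnion₂.1 hj
      exact mem_iUnion.2 ⟨j, mem_iUnion.2 ⟨⟨x, hx⟩, hyN, hyD⟩⟩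
    have hinner : ∀ j : Iio i, #↥(⋃ x : ↥(D j.1), (Nbr c x.1 ∩ D i)) < μ i := by
      intro j
      refine lt_of_le_of_lt (mk_iUnion_le _) ?_
      have hDj : #↥(D j.1) = μ j.1 := (hDp j.1).2.1
      refine mul_lt_of_lt (hμinf i) (lt_of_le_of_lt (le_of_eq hDj)
        (lt_of_le_of_lt le_sup_left (hμmono j.2))) ?_
      rcases isEmpty_or_nonempty ↥(D j.1) with hempty | hne
      · rw [ciSup_of_empty]
        exact lt_of_lt_of_le aleph0_pos (hμinf i)
      · refine lt_of_le_of_lt (ciSup_le fun x => ?_)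
          (lt_of_le_of_lt le_sup_right (hμmono j.2))
        refine le_trans (mk_le_mk_of_subset (inter_subset_inter_right _ (hDp i).1)) ?_
        exact (hDp j.1).2.2.2.2 x.1 x.2
    have hRlt : #↥R < μ i := by
      refine lt_of_le_of_lt (mk_le_mk_of_subset hRsub) ?_
      refine lt_of_le_of_lt (mk_iUnion_le _) ?_
      exact mul_lt_of_lt (hμinf i) (lt_trans (mk_Iio_ord_toType i) (hμlc i))
        (iSup_lt_of_isRegular (hμreg i) (lt_trans (mk_Iio_ord_toType i) (hμlc i)) hinner)
    have hsum : #↥(C i) + #↥R = μ i := by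
      rw [hCeq, mk_diff_add_mk (inter_subset_right : R ⊆ D i), (hDp i).2.1]
    exact eq_of_add_eq (hμinf i) hsum hRlt
  refine ⟨⋃ i, C i, ?_, ?_⟩
  · have hle : #↥(⋃ i, C i) ≤ κ :=
      le_of_le_of_eq (mk_le_mk_of_subset (subset_univ _)) (by rw [mk_univ, hα])
    refine le_antisymm hle (le_of_not_gt fun hlt => ?_)
    obtain ⟨i, hi⟩ := hθcof _ hlt
    have h2 : μ i ≤ #↥(⋃ i, C i) := by
      rw [← hCcard i]; exact mk_le_mk_of_subset (subset_iUnion C i)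
    exact absurd (lt_of_lt_of_le (lt_trans hi (hμθ i)) h2) (lt_irrefl _)
  · rintro x hx y hy hne
    obtain ⟨i, hxC⟩ := mem_iUnion.1 hx
    obtain ⟨j, hyC⟩ := mem_iUnion.1 hy
    rcases lt_trichotomy i j with hij | rfl | hji
    · have hyN : y ∉ Nbr c x := by
        intro hyN
        exact hyC.2 (mem_iUnion.2 ⟨⟨i, hij⟩, mem_biUnion hxC.1 hyN⟩)
      exact eq_of_notMem_Nbr hyN (Ne.symm hne)
    · exact (hDp i).2.2.1 x hxC.1 y hyC.1 hne
    · have hxN : x ∉ Nbr c y := fun hxN =>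
        hxC.2 (mem_iUnion.2 ⟨⟨j, hji⟩, mem_biUnion hyC.1 hxN⟩)
      rw [hsymm]
      exact eq_of_notMem_Nbr hxN hne

end DushnikMiller

/-- **Dushnik–Miller**: `κ → (κ, ω)²` for every infinite cardinal `κ`. -/
theorem dushnik_miller {α : Type u} (κ : Cardinal.{u}) (hκ : ℵ₀ ≤ κ) (hα : #α = κ)
    (c : α → α → Fin 2) (hsymm : ∀ x y, c x y = c y x) :
    (∃ X : Set α, #X = κ ∧ ∀ x ∈ X, ∀ y ∈ X, x ≠ y → c x y = 0) ∨
    (∃ Y : Set α, Y.Infinite ∧ ∀ x ∈ Y, ∀ y ∈ Y, x ≠ y → c x y = 1) := by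
  by_cases hcl : ∃ Y : Set α, Y.Infinite ∧ ∀ x ∈ Y, ∀ y ∈ Y, x ≠ y → c x y = 1
  · exact Or.inr hcl
  · left
    have hno : ∀ Y : Set α, Y.Infinite → ¬ ∀ x ∈ Y, ∀ y ∈ Y, x ≠ y → c x y = 1 :=
      fun Y h1 h2 => hcl ⟨Y, h1, h2⟩
    by_cases hreg : κ.IsRegular
    · obtain ⟨X, _, hX, hXind⟩ := DushnikMiller.regular_case c hsymm hreg Set.univ
        (by rw [Cardinal.mk_univ, hα]) (fun Y _ hinf => hno Y hinf)
      exact ⟨X, hX, hXind⟩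
    · exact DushnikMiller.singular_case c hsymm κ hκ hα hreg hno
end

section
/- ω₁ → (ω₁, ω+1)²: for every coloring c : [ω₁]² → 2, either there is an uncountable 0-homogeneous set, or there is a 1-homogeneous set of order type ω+1. -/
open Cardinal

/-- The order type of a subset of a well-ordered type. -/
noncomputable def setOType {T : Type u} [LinearOrder T] [WellFoundedLT T] (Y : Set T) :
    Ordinal.{u} :=
  Ordinal.type ((· < ·) : Y → Y → Prop)

open Set

universe u

lemma om_countable_Iio (z : (Cardinal.aleph 1).ord.ToType) : (Set.Iio z).Countable := by
  rw [Cardinal.countable_iff_lt_aleph_one]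
  exact Cardinal.mk_Iio_ord_toType z

lemma om_countable_Iic (z : (Cardinal.aleph 1).ord.ToType) : (Set.Iic z).Countable := by
  have : Set.Iic z = Set.Iio z ∪ {z} := by
    ext w; simp [le_iff_lt_or_eq]
  rw [this]
  exact (om_countable_Iio z).union (Set.countable_singleton z)

lemma om_not_countable_univ : ¬ (Set.univ : Set (Cardinal.aleph 1).ord.ToType).Countable := by
  intro h
  have h2 : Countable (Cardinal.aleph 1).ord.ToType := Set.countable_univ_iff.mp h
  have h3 : #(Cardinal.aleph 1).ord.ToType ≤ ℵ₀ := Cardinal.mk_le_aleph0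
  rw [Cardinal.mk_toType, Cardinal.card_ord] at h3
  exact absurd h3 (not_le.mpr aleph0_lt_aleph_one)

lemma om_exists_ub {S : Set (Cardinal.aleph 1).ord.ToType} (hS : S.Countable) :
    ∃ z, ∀ s ∈ S, s < z := by
  by_contra h
  push_neg at h
  apply om_not_countable_univ
  have hsub : (Set.univ : Set (Cardinal.aleph 1).ord.ToType) ⊆ ⋃ s ∈ S, Set.Iic s := by
    intro z _
    obtain ⟨s, hs, hzs⟩ := h z
    exact Set.mem_biUnion hs hzs
  exact (hS.biUnion fun s _ => om_countable_Iic s).mono hsub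

lemma om_not_countable_diff {S C : Set (Cardinal.aleph 1).ord.ToType}
    (hS : ¬ S.Countable) (hC : C.Countable) : ¬ (S \ C).Countable := by
  intro h
  apply hS
  apply (h.union hC).mono
  intro x hx
  by_cases hxC : x ∈ C
  · exact Or.inr hxC
  · exact Or.inl ⟨hx, hxC⟩

lemma om_neumer (g : (Cardinal.aleph 1).ord.ToType → (Cardinal.aleph 1).ord.ToType)
    (z0 : (Cardinal.aleph 1).ord.ToType) (hg : ∀ z, z0 < z → g z < z) :
    ∃ γ, ¬ {z | g z ≤ γ}.Countable := by
  by_contra hcon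
  push_neg at hcon
  have hstep : ∀ x : (Cardinal.aleph 1).ord.ToType, ∃ y, (∀ w, g w ≤ x → w < y) ∧ x < y := by
    intro x
    obtain ⟨y, hy⟩ := om_exists_ub ((hcon x).union (Set.countable_singleton x))
    exact ⟨y, fun w hw => hy w (Or.inl hw), hy x (Or.inr rfl)⟩
  choose f hf1 hf2 using hstep
  obtain ⟨d0, hd0⟩ := om_exists_ub (Set.countable_singleton z0)
  set d : ℕ → (Cardinal.aleph 1).ord.ToType := fun n => Nat.rec d0 (fun _ ih => f ih) n with hd
  have hdsucc : ∀ n, d (n + 1) = f (d n) := fun n => rfl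
  have hd0z : z0 < d 0 := hd0 z0 rfl
  obtain ⟨z1, hz1⟩ := om_exists_ub (Set.countable_range d)
  have hPne : ({z | ∀ n, d n ≤ z} : Set _).Nonempty :=
    ⟨z1, fun n => (hz1 _ (Set.mem_range_self n)).le⟩
  set δ := WellFounded.min (wellFounded_lt) {z | ∀ n, d n ≤ z} hPne with hδ
  have hδP : ∀ n, d n ≤ δ := WellFounded.min_mem (wellFounded_lt) {z | ∀ n, d n ≤ z} hPne
  have hz0δ : z0 < δ := lt_of_lt_of_le hd0z (hδP 0)
  have hgδ : g δ < δ := hg δ hz0δ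
  have hex : ∃ n, g δ < d n := by
    by_contra h2
    push_neg at h2
    exact absurd hgδ (WellFounded.not_lt_min (wellFounded_lt) {z | ∀ n, d n ≤ z} h2)
  obtain ⟨n, hn⟩ := hex
  have h3 : δ < d (n + 1) := by rw [hdsucc]; exact hf1 (d n) δ hn.le
  exact absurd (hδP (n + 1)) (not_le.mpr h3)

lemma exists_strictMono_seq {α : Type*} [LinearOrder α] [WellFoundedLT α] {S : Set α}
    (hS : S.Infinite) : ∃ u : ℕ → α, StrictMono u ∧ ∀ n, u n ∈ S := by
  have hwf : S.IsWF := (Set.isWF_univ_iff.mpr inferInstance).mono (Set.subset_univ S)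
  have hpwo : S.IsPWO := hwf.isPWO
  let e := hS.natEmbedding S
  obtain ⟨g, hg⟩ := hpwo.exists_monotone_subseq (f := fun n => (e n : α)) (fun n => (e n).2)
  refine ⟨fun n => (e (g n) : α), ?_, fun n => (e (g n)).2⟩
  have hmono : Monotone fun n => (e (g n) : α) := by
    intro m n h
    exact hg h
  exact hmono.strictMono_of_injective
    (fun m n h => g.injective (e.injective (Subtype.ext h)))

lemma setOType_omega_add_one {α : Type u} [LinearOrder α] [WellFoundedLT α]
    (v : ℕ → α) (hv : StrictMono v) (z : α) (hz : ∀ n, v n < z) :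
    setOType (Set.range v ∪ {z}) = Ordinal.omega0 + 1 := by
  classical
  set Y : Set α := Set.range v ∪ {z} with hY
  let rn : ULift.{u} ℕ → ULift.{u} ℕ → Prop := ULift.down ⁻¹'o ((· < ·) : ℕ → ℕ → Prop)
  let ru : ULift.{u} Unit → ULift.{u} Unit → Prop := ULift.down ⁻¹'o (@emptyRelation Unit)
  have hmem1 : ∀ n : ℕ, v n ∈ Y := fun n => Or.inl ⟨n, rfl⟩
  have hmemz : z ∈ Y := Or.inr rfl
  let f : ULift.{u} ℕ ⊕ ULift.{u} Unit → Y := fun x =>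
    Sum.rec (fun n => ⟨v n.down, hmem1 n.down⟩) (fun _ => ⟨z, hmemz⟩) x
  have hbij : Function.Bijective f := by
    constructor
    · rintro (m | m) (n | n) h
      · have : v m.down = v n.down := congrArg Subtype.val h
        have hmn : m.down = n.down := hv.injective this
        cases m; cases n; cases hmn; rfl
      · exact absurd (congrArg Subtype.val h) (ne_of_lt (hz m.down))
      · exact absurd (congrArg Subtype.val h).symm (ne_of_lt (hz n.down))
      · cases m; cases n; rfl
    · rintro ⟨y, hy | rfl⟩
      · obtain ⟨n, rfl⟩ := hy
        exact ⟨Sum.inl ⟨n⟩, rfl⟩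
      · exact ⟨Sum.inr ⟨⟨⟩⟩, rfl⟩
  let F : Sum.Lex rn ru ≃r ((· < ·) : Y → Y → Prop) := by
    refine ⟨Equiv.ofBijective f hbij, ?_⟩
    rintro (m | m) (n | n)
    · show (⟨v m.down, _⟩ : Y) < ⟨v n.down, _⟩ ↔ Sum.Lex rn ru _ _
      rw [Subtype.mk_lt_mk, hv.lt_iff_lt]
      constructor
      · intro h; exact Sum.Lex.inl h
      · intro h; cases h with
        | inl h => exact h
    · show (⟨v m.down, _⟩ : Y) < ⟨z, _⟩ ↔ Sum.Lex rn ru _ _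
      rw [Subtype.mk_lt_mk]
      constructor
      · intro _; exact Sum.Lex.sep _ _
      · intro _; exact hz m.down
    · show (⟨z, _⟩ : Y) < ⟨v n.down, _⟩ ↔ Sum.Lex rn ru _ _
      rw [Subtype.mk_lt_mk]
      constructor
      · intro h; exact absurd h (not_lt.mpr (hz n.down).le)
      · intro h; exact absurd h Sum.lex_inr_inl
    · show (⟨z, _⟩ : Y) < ⟨z, _⟩ ↔ Sum.Lex rn ru _ _
      rw [Subtype.mk_lt_mk]
      constructor
      · intro h; exact absurd h (lt_irrefl z)
      · intro h; rw [Sum.lex_inr_inr] at h; exact absurd h (fun h => h)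
  have h1 : setOType Y = Ordinal.type (Sum.Lex rn ru) := F.ordinal_type_eq.symm
  have h2 : Ordinal.type rn = Ordinal.omega0 :=
    (Ordinal.type_ulift _).trans (by rw [Ordinal.type_nat_lt, Ordinal.lift_omega0])
  have h3 : Ordinal.type ru = 1 :=
    (Ordinal.type_ulift _).trans (by rw [Ordinal.type_unit, Ordinal.lift_one])
  rw [h1, Ordinal.type_sum_lex, h2, h3]

lemma fin2_eq_one {a : Fin 2} (h : a ≠ 0) : a = 1 := by
  fin_cases a
  · exact absurd rfl h
  · rfl

/-- **Erdős–Rado**: `ω₁ → (ω₁, ω+1)²`: every symmetric 2-coloring of pairs from `ω₁` has an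
uncountable 0-homogeneous set or a 1-homogeneous set of order type `ω + 1`. -/
theorem omega1_to_omega1_omega_add_one
    (c : (Cardinal.aleph 1).ord.ToType → (Cardinal.aleph 1).ord.ToType → Fin 2)
    (hsymm : ∀ x y, c x y = c y x) :
    (∃ X : Set (Cardinal.aleph 1).ord.ToType, ¬ X.Countable ∧
        ∀ x ∈ X, ∀ y ∈ X, x ≠ y → c x y = 0) ∨
    (∃ Y : Set (Cardinal.aleph 1).ord.ToType, setOType Y = Ordinal.omega0 + 1 ∧
        ∀ x ∈ Y, ∀ y ∈ Y, x ≠ y → c x y = 1) := by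
  classical
  rw [or_iff_not_imp_right]
  intro hno
  set A : (Cardinal.aleph 1).ord.ToType → Set (Cardinal.aleph 1).ord.ToType := fun z => {y | y < z ∧ c y z = 1} with hA
  set oneh : Set (Cardinal.aleph 1).ord.ToType → Prop := fun G => ∀ x ∈ G, ∀ y ∈ G, x ≠ y → c x y = 1 with honeh
  -- Step 1: every 1-homogeneous subset of A z is finite
  have step1 : ∀ z : (Cardinal.aleph 1).ord.ToType, ∀ G, G ⊆ A z → oneh G → G.Finite := by
    intro z G hGA hG
    by_contra hinf
    obtain ⟨v, hv, hvG⟩ := exists_strictMono_seq (hinf : G.Infinite)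
    apply hno
    refine ⟨Set.range v ∪ {z}, setOType_omega_add_one v hv z (fun n => (hGA (hvG n)).1), ?_⟩
    rintro x (⟨m, rfl⟩ | rfl) y hy hxy
    · rcases hy with ⟨n, rfl⟩ | rfl
      · exact hG _ (hvG m) _ (hvG n) hxy
      · exact (hGA (hvG m)).2
    · rcases hy with ⟨n, rfl⟩ | rfl
      · rw [hsymm]; exact (hGA (hvG n)).2
      · exact absurd rfl hxy
  -- Step 2: maximal 1-homogeneous subsets of A z
  have step2 : ∀ z : (Cardinal.aleph 1).ord.ToType, ∃ F, (F ⊆ A z ∧ oneh F) ∧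
      ∀ G, G ⊆ A z → oneh G → F ⊆ G → G = F := by
    intro z
    have hchains : ∀ ch ⊆ {G : Set (Cardinal.aleph 1).ord.ToType | G ⊆ A z ∧ oneh G},
        IsChain (· ⊆ ·) ch → ∃ ub ∈ {G : Set (Cardinal.aleph 1).ord.ToType | G ⊆ A z ∧ oneh G},
        ∀ s ∈ ch, s ⊆ ub := by
      intro ch hch hchain
      refine ⟨⋃₀ ch, ⟨sUnion_subset fun G hG => (hch hG).1, ?_⟩,
        fun s hs => subset_sUnion_of_mem hs⟩
      rintro x ⟨G1, hG1, hx⟩ y ⟨G2, hG2, hy⟩ hxy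
      rcases eq_or_ne G1 G2 with rfl | hne
      · exact (hch hG1).2 x hx y hy hxy
      · rcases hchain hG1 hG2 hne with h | h
        · exact (hch hG2).2 x (h hx) y hy hxy
        · exact (hch hG1).2 x hx y (h hy) hxy
    obtain ⟨F, hF⟩ := zorn_subset _ hchains
    exact ⟨F, hF.prop, fun G h1 h2 h3 => subset_antisymm (hF.le_of_ge ⟨h1, h2⟩ h3) h3⟩
  choose F hFprop hFmax using step2
  have hFA : ∀ z, F z ⊆ A z := fun z => (hFprop z).1
  have hFone : ∀ z, oneh (F z) := fun z => (hFprop z).2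
  have hFfin : ∀ z, (F z).Finite := fun z => step1 z (F z) (hFA z) (hFone z)
  -- key lemma
  have key : ∀ y z : (Cardinal.aleph 1).ord.ToType, y < z → F y = F z → (∀ x ∈ F z, x < y) → c y z = 0 := by
    intro y z hyz hFF hbelow
    by_contra hc0
    have h1 : c y z = 1 := fin2_eq_one hc0
    have hyF : y ∉ F z := fun h => lt_irrefl y (hbelow y h)
    have hGA : insert y (F z) ⊆ A z := insert_subset ⟨hyz, h1⟩ (hFA z)
    have hGone : oneh (insert y (F z)) := by
      intro a ha b hb hab
      rcases ha with rfl | ha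
      · rcases hb with rfl | hb
        · exact absurd rfl hab
        · have hbAy : b ∈ A a := hFA a (hFF ▸ hb)
          rw [hsymm]; exact hbAy.2
      · rcases hb with rfl | hb
        · exact (hFA b (hFF ▸ ha)).2
        · exact hFone z a ha b hb hab
    have heq := hFmax z (insert y (F z)) hGA hGone (subset_insert y (F z))
    exact hyF (heq ▸ mem_insert y (F z))
  -- case: F z = ∅ for uncountably many z
  by_cases hE : ¬ {z : (Cardinal.aleph 1).ord.ToType | F z = ∅}.Countable
  · refine ⟨{z : (Cardinal.aleph 1).ord.ToType | F z = ∅}, hE, ?_⟩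
    intro x hx y hy hxy
    rcases lt_trichotomy x y with h | h | h
    · exact key x y h (hx.trans hy.symm) (fun w hw => absurd (hy ▸ hw) (notMem_empty w))
    · exact absurd h hxy
    · rw [hsymm]
      exact key y x h (hy.trans hx.symm) (fun w hw => absurd (hx ▸ hw) (notMem_empty w))
  · rw [not_not] at hE
    -- regressive bound g
    have hgz : ∀ z : (Cardinal.aleph 1).ord.ToType, ∃ b, (∀ x ∈ F z, x ≤ b) ∧ ((F z).Nonempty → b < z) := by
      intro z
      rcases (F z).eq_empty_or_nonempty with h | h
      · exact ⟨z, fun x hx => absurd (h ▸ hx) (notMem_empty x),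
          fun hne => absurd h hne.ne_empty⟩
      · obtain ⟨b, hbmem, hbmax⟩ := Set.Finite.exists_maximalFor id (F z) (hFfin z) h
        refine ⟨b, fun x hx => ?_, fun _ => (hFA z hbmem).1⟩
        rcases le_total x b with h2 | h2
        · exact h2
        · exact hbmax hx h2
    choose g hg1 hg2 using hgz
    obtain ⟨z0, hz0⟩ := om_exists_ub hE
    have hreg : ∀ z, z0 < z → g z < z := by
      intro z hz
      apply hg2
      rcases (F z).eq_empty_or_nonempty with h | h
      · exact absurd (hz0 z h) (not_lt.mpr hz.le)
      · exact h
    obtain ⟨γ, hγ⟩ := om_neumer g z0 hreg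
    -- pigeonhole on the finite sets
    have hpig : ∃ t : Set (Cardinal.aleph 1).ord.ToType, ¬ {z : (Cardinal.aleph 1).ord.ToType | g z ≤ γ ∧ F z = t}.Countable := by
      by_contra hall
      push_neg at hall
      apply hγ
      have hsub : {z : (Cardinal.aleph 1).ord.ToType | g z ≤ γ} ⊆
          ⋃ t ∈ {t : Set (Cardinal.aleph 1).ord.ToType | t.Finite ∧ t ⊆ Set.Iic γ}, {z : (Cardinal.aleph 1).ord.ToType | g z ≤ γ ∧ F z = t} := by
        intro z hz
        exact mem_biUnion ⟨hFfin z, fun x hx => le_trans (hg1 z x hx) hz⟩ ⟨hz, rfl⟩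
      exact ((countable_setOf_finite_subset (om_countable_Iic γ)).biUnion
        fun t _ => hall t).mono hsub
    obtain ⟨t, htunc⟩ := hpig
    refine ⟨{z : (Cardinal.aleph 1).ord.ToType | g z ≤ γ ∧ F z = t} \ Set.Iic γ,
      om_not_countable_diff htunc (om_countable_Iic γ), ?_⟩
    have hkey2 : ∀ x y : (Cardinal.aleph 1).ord.ToType, x ∈ {z : (Cardinal.aleph 1).ord.ToType | g z ≤ γ ∧ F z = t} \ Set.Iic γ →
        y ∈ {z : (Cardinal.aleph 1).ord.ToType | g z ≤ γ ∧ F z = t} \ Set.Iic γ → x < y → c x y = 0 := by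
      rintro x y ⟨⟨hgx, hFx⟩, hxγ⟩ ⟨⟨hgy, hFy⟩, _⟩ hxy
      refine key x y hxy (hFx.trans hFy.symm) ?_
      intro w hw
      have hwγ : w ≤ γ := le_trans (hg1 y w hw) hgy
      exact lt_of_le_of_lt hwγ (not_le.mp hxγ)
    intro x hx y hy hxy
    rcases lt_trichotomy x y with h | h | h
    · exact hkey2 x y hx hy h
    · exact absurd h hxy
    · rw [hsymm]; exact hkey2 y x hy hx h
end

section
/- If the relation ω₂ → (ω₂, ω₁)² holds, then CH holds (2^ω = ω₁). -/
open Cardinal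

lemma countable_of_strictMono_real {W : Type*} [LinearOrder W] [WellFoundedLT W]
    (f : W → ℝ) (hf : StrictMono f) : Countable W := by
  classical
  have hsucc : ∀ x : W, (∃ y, x < y) → ∃ q : ℚ, f x < q ∧ ∀ y, x < y → (q : ℝ) < f y := by
    intro x hx
    obtain ⟨m, hm, hmin⟩ :=
      (IsWellFounded.wf (r := ((· < ·) : W → W → Prop))).has_min {y | x < y} hx
    obtain ⟨q, hq1, hq2⟩ := exists_rat_btwn (hf hm)
    exact ⟨q, hq1, fun y hy => hq2.trans_le (hf.monotone (not_lt.1 (hmin y hy)))⟩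
  choose q hq1 hq2 using hsucc
  set F : W → Option ℚ := fun x => if hx : ∃ y, x < y then some (q x hx) else none with hF
  have key : ∀ x y : W, x < y → F x ≠ F y := by
    intro x y h heq
    have hx : ∃ z, x < z := ⟨y, h⟩
    rw [hF] at heq
    simp only [dif_pos hx] at heq
    by_cases hy : ∃ z, y < z
    · rw [dif_pos hy] at heq
      have h3 : (q x hx : ℝ) < q y hy := (hq2 x hx y h).trans (hq1 y hy)
      rw [Option.some_inj.1 heq] at h3
      exact lt_irrefl _ h3
    · rw [dif_neg hy] at heq
      exact Option.some_ne_none _ heq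
  have hinj : Function.Injective F := by
    intro x y heq
    by_contra hne
    rcases lt_or_gt_of_ne hne with h | h
    · exact key x y h heq
    · exact key y x h heq.symm
  exact hinj.countable

/-- If `ω₂ → (ω₂, ω₁)²` holds, then CH holds. -/
theorem partition_omega2_implies_CH
    (hpart : ∀ c : (Cardinal.aleph 2).ord.ToType → (Cardinal.aleph 2).ord.ToType → Fin 2,
      (∀ x y, c x y = c y x) →
      ((∃ X : Set (Cardinal.aleph 2).ord.ToType, #X = Cardinal.aleph 2 ∧
          ∀ x ∈ X, ∀ y ∈ X, x ≠ y → c x y = 0) ∨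
       (∃ Y : Set (Cardinal.aleph 2).ord.ToType, setOType Y = (Cardinal.aleph 1).ord ∧
          ∀ x ∈ Y, ∀ y ∈ Y, x ≠ y → c x y = 1))) :
    (2 : Cardinal.{0}) ^ ℵ₀ = Cardinal.aleph 1 := by
  classical
  have h1 : Cardinal.aleph 1 ≤ (2 : Cardinal.{0}) ^ ℵ₀ := by
    rw [Cardinal.two_power_aleph0]; exact Cardinal.aleph_one_le_continuum
  by_contra hCH
  have h2 : Cardinal.aleph 1 < (2 : Cardinal.{0}) ^ ℵ₀ := h1.lt_of_ne (Ne.symm hCH)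
  have h3 : Cardinal.aleph 2 ≤ 𝔠 := by
    rw [← Cardinal.two_power_aleph0]
    have he : Cardinal.aleph 2 = Order.succ (Cardinal.aleph 1) := by
      rw [← Cardinal.aleph_succ]; norm_num
    rw [he]
    exact Order.succ_le_of_lt h2
  have hTcard : #(Cardinal.aleph 2).ord.ToType = Cardinal.aleph 2 := by
    rw [Cardinal.mk_toType, Cardinal.card_ord]
  have hle : #(Cardinal.aleph 2).ord.ToType ≤ #(ULift ℝ) := by
    rw [hTcard, Cardinal.mk_uLift, Cardinal.mk_real]
    simpa using Cardinal.lift_le.2 h3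
  obtain ⟨f⟩ := (Cardinal.le_def _ _).1 hle
  set g : (Cardinal.aleph 2).ord.ToType → ℝ := fun x => (f x).down with hg
  have hginj : Function.Injective g :=
    fun a b hab => f.injective (ULift.down_injective hab)
  set c : (Cardinal.aleph 2).ord.ToType → (Cardinal.aleph 2).ord.ToType → Fin 2 :=
    fun x y => if (x < y ↔ g x < g y) then 0 else 1 with hc
  have key : ∀ x y : (Cardinal.aleph 2).ord.ToType,
      x ≠ y → ((x < y ↔ g x < g y) ↔ (y < x ↔ g y < g x)) := by
    intro x y hxy
    have hfne : g x ≠ g y := fun e => hxy (hginj e)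
    rcases lt_or_gt_of_ne hxy with h | h <;> rcases lt_or_gt_of_ne hfne with h' | h' <;>
      simp [h, h', h.not_gt, h'.not_gt]
  have hsym : ∀ x y, c x y = c y x := by
    intro x y
    by_cases hxy : x = y
    · rw [hxy]
    · simp only [hc]
      exact if_congr (key x y hxy) rfl rfl
  have haleph0_lt1 : ℵ₀ < Cardinal.aleph 1 := by
    rw [← Cardinal.aleph_zero]; exact Cardinal.aleph_lt_aleph.2 (by norm_num)
  have haleph0_lt2 : ℵ₀ < Cardinal.aleph 2 := by
    rw [← Cardinal.aleph_zero]; exact Cardinal.aleph_lt_aleph.2 (by norm_num)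
  rcases hpart c hsym with ⟨X, hXcard, hX0⟩ | ⟨Y, hYtype, hY1⟩
  · -- 0-homogeneous: g is strictly monotone on X, so X is countable
    have hmono : StrictMono (fun a : X => g a.1) := by
      intro a b hab
      have hab' : a.1 < b.1 := hab
      have h0 := hX0 a.1 a.2 b.1 b.2 hab'.ne
      by_cases hcond : (a.1 < b.1 ↔ g a.1 < g b.1)
      · exact hcond.1 hab'
      · simp only [hc, if_neg hcond] at h0
        exact absurd h0 (by decide)
    have : Countable X := countable_of_strictMono_real _ hmono
    have hXle : #X ≤ ℵ₀ := Cardinal.mk_le_aleph0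
    rw [hXcard] at hXle
    exact absurd hXle haleph0_lt2.not_ge
  · -- 1-homogeneous: g is strictly antitone on Y, so Y is countable
    have hmono : StrictMono (fun a : Y => -(g a.1)) := by
      intro a b hab
      have hab' : a.1 < b.1 := hab
      have hfne : g a.1 ≠ g b.1 := fun e => hab'.ne (hginj e)
      have h1' := hY1 a.1 a.2 b.1 b.2 hab'.ne
      by_cases hcond : (a.1 < b.1 ↔ g a.1 < g b.1)
      · simp only [hc, if_pos hcond] at h1'
        exact absurd h1' (by decide)
      · have hnlt : ¬ g a.1 < g b.1 := fun hlt => hcond ⟨fun _ => hlt, fun _ => hab'⟩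
        have : g b.1 < g a.1 := (lt_or_gt_of_ne hfne).resolve_left hnlt
        simpa using this
    have : Countable Y := countable_of_strictMono_real _ hmono
    have hYle : #Y ≤ ℵ₀ := Cardinal.mk_le_aleph0
    have hYcard : #Y = Cardinal.aleph 1 := by
      have hcongr := congrArg Ordinal.card hYtype
      rwa [setOType, Ordinal.card_type, Cardinal.card_ord] at hcongr
    rw [hYcard] at hYle
    exact absurd hYle haleph0_lt1.not_ge
end

section
/- Assuming CH and 2^{ω₁} = ω₂, the relation ω₂ ↛ (ω₂, ω₁+2)² holds: there is a coloring c : [ω₂]² → 2 admitting no 0-homogeneous set of size ω₂ and no 1-homogeneous set of order type ω₁ + 2. -/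
open Cardinal Ordinal

noncomputable section
namespace ERNeg

universe u

abbrev TT : Type u := (Cardinal.aleph 2).ord.ToType
abbrev O1 : Type u := (Cardinal.aleph 1).ord.ToType

lemma mk_TT : #TT = Cardinal.aleph 2 := by
  rw [Cardinal.mk_toType, Cardinal.card_ord]

lemma mk_O1 : #O1 = Cardinal.aleph 1 := by
  rw [Cardinal.mk_toType, Cardinal.card_ord]

lemma two_eq_succ_one : (2 : Ordinal) = Order.succ 1 := by
  rw [← Ordinal.add_one_eq_succ, one_add_one_eq_two]

lemma one_eq_succ_zero : (1 : Ordinal) = Order.succ 0 := by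
  rw [← Ordinal.add_one_eq_succ, zero_add]

lemma aleph2_eq : Cardinal.aleph 2 = Order.succ (Cardinal.aleph 1) := by
  rw [two_eq_succ_one, Cardinal.aleph_succ]

lemma aleph1_eq : Cardinal.aleph 1 = Order.succ ℵ₀ := by
  rw [one_eq_succ_zero, Cardinal.aleph_succ, Cardinal.aleph_zero]

lemma lt_aleph2 {c : Cardinal} : c < Cardinal.aleph 2 ↔ c ≤ Cardinal.aleph 1 := by
  rw [aleph2_eq, Order.lt_succ_iff]

lemma lt_aleph1 {c : Cardinal} : c < Cardinal.aleph 1 ↔ c ≤ ℵ₀ := by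
  rw [aleph1_eq, Order.lt_succ_iff]

instance : IsWellOrder TT ((· < ·) : TT → TT → Prop) := isWellOrder_lt
instance : IsWellOrder O1 ((· < ·) : O1 → O1 → Prop) := isWellOrder_lt

instance : Nonempty O1 := by
  rw [Ordinal.nonempty_toType_iff]
  intro h
  have h2 : (Cardinal.aleph 1).ord = (0 : Cardinal).ord := by
    rw [h, Cardinal.ord_zero]
  have := Cardinal.ord_injective h2
  exact (Cardinal.aleph_pos 1).ne' this

instance : Nonempty TT := by
  rw [Ordinal.nonempty_toType_iff]
  intro h
  have h2 : (Cardinal.aleph 2).ord = (0 : Cardinal).ord := by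
    rw [h, Cardinal.ord_zero]
  have := Cardinal.ord_injective h2
  exact (Cardinal.aleph_pos 2).ne' this

lemma mk_Iio_TT (y : TT) : #{x : TT // x < y} ≤ Cardinal.aleph 1 := by
  have h1 : #{x : TT // x < y} = (Ordinal.typein (α := TT) (· < ·) y).card :=
    Ordinal.card_typein (r := ((· < ·) : TT → TT → Prop)) y
  rw [h1, ← lt_aleph2, ← Cardinal.lt_ord]
  exact Ordinal.typein_lt_self y

lemma mk_Iio_O1 (b : O1) : #{x : O1 // x < b} ≤ ℵ₀ := by
  have h1 : #{x : O1 // x < b} = (Ordinal.typein (α := O1) (· < ·) b).card :=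
    Ordinal.card_typein (r := ((· < ·) : O1 → O1 → Prop)) b
  rw [h1, ← lt_aleph1, ← Cardinal.lt_ord]
  exact Ordinal.typein_lt_self b

lemma mk_Iic_of_Iio {α : Type*} [LinearOrder α] {c : Cardinal} (hc : ℵ₀ ≤ c)
    (b : α) (h : #{x : α // x < b} ≤ c) : #{x : α // x ≤ b} ≤ c := by
  have hinj : Function.Injective (fun x : {x : α // x ≤ b} =>
      if h : (x : α) < b then (some ⟨x, h⟩ : Option {x : α // x < b}) else none) := by
    intro x y hxy
    by_cases hx : (x : α) < b <;> by_cases hy : (y : α) < b <;>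
      simp [hx, hy] at hxy
    · exact Subtype.ext hxy
    · have hx' : (x : α) = b := le_antisymm x.2 (not_lt.1 hx)
      have hy' : (y : α) = b := le_antisymm y.2 (not_lt.1 hy)
      exact Subtype.ext (hx'.trans hy'.symm)
  have := Cardinal.mk_le_of_injective hinj
  rw [Cardinal.mk_option] at this
  calc #{x : α // x ≤ b} ≤ #{x : α // x < b} + 1 := this
    _ ≤ c + c := add_le_add h (le_trans (by norm_num) hc)
    _ = c := Cardinal.add_eq_self hc

lemma mk_Iic_TT (y : TT) : #{x : TT // x ≤ y} ≤ Cardinal.aleph 1 :=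
  mk_Iic_of_Iio (Cardinal.aleph0_le_aleph 1) y (mk_Iio_TT y)

lemma mk_Iic_O1 (b : O1) : #{x : O1 // x ≤ b} ≤ ℵ₀ :=
  mk_Iic_of_Iio le_rfl b (mk_Iio_O1 b)



/-! ### The split function and lexicographic comparison -/

open Classical in
def DD (a b : O1 → Bool) : O1 :=
  if h : ∃ γ, a γ ≠ b γ then
    (IsWellFounded.wf (α := O1) (r := (· < ·))).min {γ | a γ ≠ b γ} h
  else Classical.arbitrary O1

lemma DD_mem {a b : O1 → Bool} (h : a ≠ b) : a (DD a b) ≠ b (DD a b) := by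
  classical
  rw [DD, dif_pos (Function.ne_iff.1 h)]
  exact (WellFounded.min_mem _ {γ | a γ ≠ b γ} (Function.ne_iff.1 h) :
    _ ∈ {γ | a γ ≠ b γ})

lemma DD_agree {a b : O1 → Bool} (h : a ≠ b) {γ : O1} (hγ : γ < DD a b) : a γ = b γ := by
  classical
  by_contra hne
  rw [DD, dif_pos (Function.ne_iff.1 h)] at hγ
  exact WellFounded.not_lt_min _ {γ | a γ ≠ b γ}
    (hne : _ ∈ {γ | a γ ≠ b γ}) hγ

lemma DD_unique {a b : O1 → Bool} {γ₀ : O1} (hag : ∀ γ < γ₀, a γ = b γ)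
    (hne : a γ₀ ≠ b γ₀) : DD a b = γ₀ := by
  have h : a ≠ b := fun e => hne (congrFun e γ₀)
  rcases lt_trichotomy (DD a b) γ₀ with hlt | he | hgt
  · exact absurd (hag _ hlt) (DD_mem h)
  · exact he
  · exact absurd (DD_agree h hgt) hne

lemma DD_symm {a b : O1 → Bool} (h : a ≠ b) : DD a b = DD b a :=
  DD_unique (fun _ hγ => (DD_agree h.symm hγ).symm) (fun e => DD_mem h.symm e.symm)

def lexLt (a b : O1 → Bool) : Prop :=
  a ≠ b ∧ a (DD a b) = false ∧ b (DD a b) = true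

lemma lexLt_total {a b : O1 → Bool} (h : a ≠ b) : lexLt a b ∨ lexLt b a := by
  have hmem := DD_mem h
  rcases Bool.eq_false_or_eq_true (a (DD a b)) with ha | ha
  · right
    have hD : DD b a = DD a b := (DD_symm h).symm
    refine ⟨h.symm, ?_, ?_⟩
    · rw [hD]
      rcases Bool.eq_false_or_eq_true (b (DD a b)) with hb | hb
      · exact absurd (hb.trans ha.symm) (Ne.symm hmem)
      · exact hb
    · rw [hD]; exact ha
  · left
    refine ⟨h, ha, ?_⟩
    rcases Bool.eq_false_or_eq_true (b (DD a b)) with hb | hb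
    · exact hb
    · exact absurd (ha.trans hb.symm) hmem

lemma lexLt_asymm {a b : O1 → Bool} (hab : lexLt a b) (hba : lexLt b a) : False := by
  have hD : DD b a = DD a b := (DD_symm hab.1).symm
  obtain ⟨h1, h2, h3⟩ := hba
  rw [hD] at h3
  rw [hab.2.1] at h3
  simp at h3

/-- If `h <lex g <lex a`, then the split of `a` with `h` is at most the split of `g` with `h`. -/
lemma DD_le_sandwich {h g a : O1 → Bool} (hhg : lexLt h g) (hga : lexLt g a)
    (hha : h ≠ a) : DD h a ≤ DD h g := by
  by_contra hgt
  push_neg at hgt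
  set e := DD h g with he
  have hae : a e = h e := (DD_agree hha hgt).symm
  have hge : g e = true := hhg.2.2
  have hhe : h e = false := hhg.2.1
  have hag : ∀ γ < e, g γ = a γ := by
    intro γ hγ
    have h1 : h γ = g γ := DD_agree hhg.1 hγ
    have h2 : a γ = h γ := (DD_agree hha (hγ.trans hgt)).symm
    rw [← h1, h2, h1]
  have hDga : DD g a = e := DD_unique hag (by rw [hge, hae, hhe]; simp)
  have := hga.2.1
  rw [hDga, hge] at this
  simp at this

/-! ### Cardinal counting helpers -/

def VV : Type u := (b : O1) × ({γ : O1 // γ ≤ b} → Bool)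

lemma mk_VV (hCH : (2 : Cardinal.{u}) ^ ℵ₀ = Cardinal.aleph 1) :
    #VV.{u} ≤ Cardinal.aleph 1 := by
  have h1 : #VV = Cardinal.sum.{u,u} fun b : O1 => #({γ : O1 // γ ≤ b} → Bool) :=
    Cardinal.mk_sigma.{u,u} _
  have h2 : ∀ b : O1.{u}, #({γ : O1 // γ ≤ b} → Bool) ≤ Cardinal.aleph 1 := by
    intro b
    have h3 : #({γ : O1 // γ ≤ b} → Bool) = (2 : Cardinal) ^ #{γ : O1 // γ ≤ b} := by
      rw [Cardinal.mk_arrow, Cardinal.mk_bool, Cardinal.lift_two, Cardinal.lift_uzero]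
    rw [h3]
    calc (2 : Cardinal) ^ #{γ : O1 // γ ≤ b} ≤ (2 : Cardinal) ^ ℵ₀ :=
          Cardinal.power_le_power_left (by norm_num) (mk_Iic_O1 b)
      _ = Cardinal.aleph 1 := hCH
  calc #VV ≤ Cardinal.sum.{u,u} fun _ : O1 => Cardinal.aleph 1 := h1 ▸ Cardinal.sum_le_sum.{u,u} _ _ h2
    _ = #O1 * Cardinal.aleph 1 := Cardinal.sum_const'.{u} _ _
    _ = Cardinal.aleph 1 := by rw [mk_O1]; exact Cardinal.mul_eq_self (Cardinal.aleph0_le_aleph 1)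

/-- Any `≤ ℵ₁`-indexed family in `TT` is strictly bounded above. -/
lemma small_bounded {ι : Type u} (hι : #ι ≤ Cardinal.aleph 1) (g : ι → TT.{u}) :
    ∃ t₀ : TT, ∀ i, g i < t₀ := by
  by_contra hcon
  push_neg at hcon
  choose idx hidx using hcon
  have hinj : Function.Injective fun t : TT =>
      (⟨idx t, ⟨t, hidx t⟩⟩ : Σ i : ι, {x : TT // x ≤ g i}) := by
    have : Function.LeftInverse (fun z : Σ i : ι, {x : TT // x ≤ g i} => (z.2 : TT))
        (fun t : TT => (⟨idx t, ⟨t, hidx t⟩⟩ : Σ i : ι, {x : TT // x ≤ g i})) :=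
      fun t => rfl
    exact this.injective
  have h1 : #TT ≤ #(Σ i : ι, {x : TT // x ≤ g i}) := Cardinal.mk_le_of_injective hinj
  have h2 : #(Σ i : ι, {x : TT // x ≤ g i}) = Cardinal.sum.{u,u} fun i => #{x : TT // x ≤ g i} :=
    Cardinal.mk_sigma.{u,u} _
  have h3 : #TT ≤ #ι * Cardinal.aleph 1 := by
    rw [mk_TT] at *
    calc Cardinal.aleph 2 ≤ Cardinal.sum.{u,u} fun i => #{x : TT // x ≤ g i} := h2 ▸ h1
      _ ≤ Cardinal.sum.{u,u} fun _ : ι => Cardinal.aleph 1 :=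
          Cardinal.sum_le_sum.{u,u} _ _ fun i => mk_Iic_TT (g i)
      _ = #ι * Cardinal.aleph 1 := Cardinal.sum_const'.{u} _ _
  rw [mk_TT] at h3
  have h4 : #ι * Cardinal.aleph 1 ≤ Cardinal.aleph 1 * Cardinal.aleph 1 :=
    mul_le_mul' hι le_rfl
  rw [Cardinal.mul_eq_self (Cardinal.aleph0_le_aleph 1)] at h4
  exact absurd (h3.trans h4) (by
    simp only [not_le]
    exact Cardinal.aleph_lt_aleph.2 one_lt_two)

/-- Stabilization: an `ℵ₂`-sized set mapped into a `≤ ℵ₁`-sized type has an `ℵ₂`-sized fiber. -/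
lemma stab {V : Type u} (hV : #V ≤ Cardinal.aleph 1) (S : Set TT.{u})
    (hS : #S = Cardinal.aleph 2) (g : TT → V) :
    ∃ v : V, #({y ∈ S | g y = v} : Set TT) = Cardinal.aleph 2 := by
  by_contra hcon
  push_neg at hcon
  have hle : ∀ v : V, #({y ∈ S | g y = v} : Set TT) ≤ Cardinal.aleph 1 := by
    intro v
    have h1 : #({y ∈ S | g y = v} : Set TT) ≤ #TT := Cardinal.mk_set_le _
    rw [mk_TT] at h1
    exact lt_aleph2.1 (lt_of_le_of_ne h1 (hcon v))
  have hinj : Function.Injective fun y : S =>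
      (⟨g y, ⟨(y : TT), y.2, rfl⟩⟩ : Σ v : V, ({z ∈ S | g z = v} : Set TT)) := by
    intro a b hab
    exact Subtype.ext (congrArg (fun z : Σ v : V, ({z ∈ S | g z = v} : Set TT) => (z.2 : TT)) hab)
  have h1 : #S ≤ #(Σ v : V, ({z ∈ S | g z = v} : Set TT)) := Cardinal.mk_le_of_injective hinj
  have h2 : #(Σ v : V, ({z ∈ S | g z = v} : Set TT))
      = Cardinal.sum.{u,u} fun v => #({z ∈ S | g z = v} : Set TT) := Cardinal.mk_sigma.{u,u} _
  have h3 : Cardinal.aleph 2 ≤ #V * Cardinal.aleph 1 := by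
    calc Cardinal.aleph 2 = #S := hS.symm
      _ ≤ Cardinal.sum.{u,u} fun v => #({z ∈ S | g z = v} : Set TT) := h2 ▸ h1
      _ ≤ Cardinal.sum.{u,u} fun _ : V => Cardinal.aleph 1 := Cardinal.sum_le_sum.{u,u} _ _ hle
      _ = #V * Cardinal.aleph 1 := Cardinal.sum_const'.{u} _ _
  have h4 : #V * Cardinal.aleph 1 ≤ Cardinal.aleph 1 :=
    le_of_le_of_eq (mul_le_mul' hV le_rfl) (Cardinal.mul_eq_self (Cardinal.aleph0_le_aleph 1))
  exact absurd (h3.trans h4) (by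
    simp only [not_le]
    exact Cardinal.aleph_lt_aleph.2 one_lt_two)



/-! ### The pack of bijections, and the coloring -/

structure Pack : Type u where
  f : TT.{u} ≃ (O1.{u} → Bool)
  eZ : TT.{u} ≃ (O1.{u} → TT.{u})

lemma pack_exists (hCH1 : (2 : Cardinal.{u}) ^ Cardinal.aleph 1 = Cardinal.aleph 2) :
    Nonempty Pack.{u} := by
  have h1 : #(O1.{u} → Bool) = Cardinal.aleph 2 := by
    rw [Cardinal.mk_arrow, Cardinal.mk_bool, Cardinal.lift_two, mk_O1,
      Cardinal.lift_uzero, hCH1]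
  have h2 : #(O1.{u} → TT.{u}) = Cardinal.aleph 2 := by
    have := (Cardinal.power_def TT O1).symm
    rw [mk_TT, mk_O1] at this
    rw [this, ← hCH1, ← Cardinal.power_mul,
      Cardinal.mul_eq_self (Cardinal.aleph0_le_aleph 1), hCH1]
  obtain ⟨e1⟩ := Cardinal.eq.1 (mk_TT.trans h1.symm)
  obtain ⟨e2⟩ := Cardinal.eq.1 (mk_TT.trans h2.symm)
  exact ⟨⟨e1, e2⟩⟩

variable (P : Pack.{u})

/-- The listing of all (nonempty, `≤ ℵ₁`-sized) subsets of `TT`, via ranges. -/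
def AA (ζ : TT.{u}) : Set TT.{u} := Set.range (P.eZ ζ)

lemma exists_index {B : Set TT} (hne : B.Nonempty) (hB : #B ≤ Cardinal.aleph 1) :
    ∃ ζ : TT, AA P ζ = B := by
  have : Nonempty B := hne.to_subtype
  obtain ⟨j⟩ := (Cardinal.le_def (↥B) O1).1 (by rw [mk_O1]; exact hB)
  set inv : O1 → ↥B := Function.invFun (⇑j) with hinv
  have hsurj : Function.Surjective inv := Function.invFun_surjective j.injective
  refine ⟨P.eZ.symm (fun v => ((inv v : ↥B) : TT)), ?_⟩
  rw [AA, P.eZ.apply_symm_apply]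
  ext x
  constructor
  · rintro ⟨v, rfl⟩
    exact (Function.invFun j v).2
  · intro hx
    obtain ⟨v, hv⟩ := hsurj ⟨x, hx⟩
    refine ⟨v, ?_⟩
    show ((inv v : ↥B) : TT) = x
    rw [hv]

/-- For each `y`, a fixed injection of the predecessors of `y` into `O1`. -/
def ey (y : TT.{u}) : {x : TT.{u} // x < y} ↪ O1.{u} :=
  Classical.choice ((Cardinal.le_def _ _).1 (by rw [mk_O1]; exact mk_Iio_TT y))

/-- Candidate witnesses at stage `y` for the listed set with index `ζ`. -/
def cand (y ζ : TT) (h : ζ < y) : Set TT :=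
  {x | x < y ∧ x ∈ AA P ζ ∧ lexLt (P.f y) (P.f x) ∧ ey y ⟨ζ, h⟩ < DD (P.f y) (P.f x)}

open Classical in
/-- The chosen witness (if any) at stage `y` for index `ζ`. -/
def wit (y ζ : TT) (h : ζ < y) : TT :=
  if H : (cand P y ζ h).Nonempty then H.some else y

/-- The set of points colored `1` with `y`, among predecessors of `y`. -/
def Ey (y : TT) : Set TT :=
  {x | ∃ ζ : TT, ∃ h : ζ < y, (cand P y ζ h).Nonempty ∧ wit P y ζ h = x}

lemma mem_Ey {x y : TT} (hx : x ∈ Ey P y) :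
    x < y ∧ lexLt (P.f y) (P.f x) ∧
      ∃ ζ : TT, ∃ h : ζ < y, wit P y ζ h = x ∧ ey y ⟨ζ, h⟩ < DD (P.f y) (P.f x) := by
  obtain ⟨ζ, h, H, hw⟩ := hx
  have hmem : wit P y ζ h ∈ cand P y ζ h := by
    classical
    rw [wit, dif_pos H]
    exact H.some_mem
  rw [hw] at hmem
  exact ⟨hmem.1, hmem.2.2.1, ζ, h, hw, hmem.2.2.2⟩

open Classical in
/-- The coloring. -/
def cc (x y : TT) : Fin 2 :=
  if x < y then (if x ∈ Ey P y then 1 else 0)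
  else if y < x then (if y ∈ Ey P x then 1 else 0) else 0

lemma cc_symm (x y : TT) : cc P x y = cc P y x := by
  classical
  rcases lt_trichotomy x y with h | h | h
  · rw [cc, cc, if_pos h, if_neg (asymm h), if_pos h]
  · subst h
    rfl
  · rw [cc, cc, if_neg (asymm h), if_pos h, if_pos h]

lemma cc_eq_one_of {x y : TT} (h : x < y) (hE : x ∈ Ey P y) : cc P x y = 1 := by
  classical
  rw [cc, if_pos h, if_pos hE]

lemma mem_Ey_of_cc {x y : TT} (h : x < y) (hc : cc P x y = 1) : x ∈ Ey P y := by
  classical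
  rw [cc, if_pos h] at hc
  by_contra hE
  rw [if_neg hE] at hc
  exact absurd hc (by decide)



/-! ### Lemma A : lex-increasing (along `<` on `TT`) sets have size at most `ℵ₁` -/

lemma lemA (hCH : (2 : Cardinal.{u}) ^ ℵ₀ = Cardinal.aleph 1)
    (F : TT.{u} → (O1.{u} → Bool)) (S : Set TT.{u})
    (hal : ∀ x ∈ S, ∀ y ∈ S, x < y → lexLt (F x) (F y)) :
    #S ≤ Cardinal.aleph 1 := by
  classical
  set nt : Set TT := {x ∈ S | ∃ z ∈ S, x < z} with hnt
  set tp : Set TT := {x ∈ S | ¬ ∃ z ∈ S, x < z} with htp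
  have hcover : S ⊆ nt ∪ tp := by
    intro x hx
    by_cases h : ∃ z ∈ S, x < z
    · exact Or.inl ⟨hx, h⟩
    · exact Or.inr ⟨hx, h⟩
  have htp1 : #tp ≤ 1 := by
    rw [Cardinal.mk_le_one_iff_set_subsingleton]
    intro a ha b hb
    by_contra hne
    rcases lt_or_gt_of_ne hne with h | h
    · exact ha.2 ⟨b, hb.1, h⟩
    · exact hb.2 ⟨a, ha.1, h⟩
  -- successor function on nt
  have hntS : ∀ x : nt, ({z ∈ S | (x : TT) < z}).Nonempty := by
    rintro ⟨x, hxS, z, hzS, hz⟩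
    exact ⟨z, hzS, hz⟩
  set nx : nt → TT := fun x =>
    (IsWellFounded.wf (α := TT) (r := (· < ·))).min {z ∈ S | (x : TT) < z} (hntS x) with hnx
  have hnx_mem : ∀ x : nt, nx x ∈ S ∧ (x : TT) < nx x := fun x =>
    WellFounded.min_mem _ {z ∈ S | (x : TT) < z} (hntS x)
  have hnx_min : ∀ x : nt, ∀ z ∈ S, (x : TT) < z → nx x ≤ z := by
    intro x z hzS hz
    exact not_lt.1 (WellFounded.not_lt_min _ {z ∈ S | (x : TT) < z} ⟨hzS, hz⟩)
  -- the coding map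
  have hlex : ∀ x : nt, lexLt (F x) (F (nx x)) := fun x =>
    hal _ x.2.1 _ (hnx_mem x).1 (hnx_mem x).2
  set J : nt → VV := fun x =>
    ⟨DD (F x) (F (nx x)), fun γ => F x γ.1⟩ with hJ
  have hJinjlt : ∀ x x' : nt, (x : TT) < (x' : TT) → J x ≠ J x' := by
    intro x x' hlt hEq
    set δ := DD (F x) (F (nx x)) with hδ
    have h1 : DD (F x') (F (nx x')) = δ := (congrArg Sigma.fst hEq).symm
    -- restriction equality
    have h2 : ∀ γ : O1, γ ≤ δ → F x γ = F x' γ := by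
      intro γ hγ
      have hh := congrArg
        (fun z : VV => if h : γ ≤ z.1 then z.2 ⟨γ, h⟩ else false) hEq
      rw [dif_pos hγ, dif_pos (h1.symm ▸ hγ : γ ≤ DD (F x') (F (nx x')))] at hh
      exact hh
    have hxx' : (x : TT) ∈ S := x.2.1
    have hx'S : (x' : TT) ∈ S := x'.2.1
    have hlx : lexLt (F x) (F (nx x)) := hlex x
    have hdig1 : F x δ = false := hlx.2.1
    have hdig2 : F (nx x) δ = true := hlx.2.2
    have hnxle : nx x ≤ (x' : TT) := hnx_min x _ hx'S hlt
    rcases eq_or_lt_of_le hnxle with he | hlt2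
    · -- nx x = x'
      have : F x' δ = true := by rw [← he]; exact hdig2
      rw [← h2 δ le_rfl] at this
      rw [hdig1] at this
      simp at this
    · -- nx x < x'
      have hlx2 : lexLt (F (nx x)) (F x') := hal _ (hnx_mem x).1 _ hx'S hlt2
      have hagree : ∀ γ < δ, F (nx x) γ = F x' γ := by
        intro γ hγ
        have ha1 : F x γ = F (nx x) γ := DD_agree hlx.1 hγ
        have ha2 : F x γ = F x' γ := h2 γ hγ.le
        rw [← ha1, ha2]
      have hne2 : F (nx x) δ ≠ F x' δ := by
        rw [hdig2, ← h2 δ le_rfl, hdig1]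
        simp
      have hDes : DD (F (nx x)) (F x') = δ := DD_unique hagree hne2
      have := hlx2.2.1
      rw [hDes, hdig2] at this
      simp at this
  have hJinj : Function.Injective J := by
    intro x x' h
    by_contra hne
    have hne' : (x : TT) ≠ (x' : TT) := fun e => hne (Subtype.ext e)
    rcases lt_or_gt_of_ne hne' with hlt | hlt
    · exact hJinjlt x x' hlt h
    · exact hJinjlt x' x hlt h.symm
  have hnt1 : #nt ≤ Cardinal.aleph 1 :=
    (Cardinal.mk_le_of_injective hJinj).trans (mk_VV hCH)
  calc #S ≤ #(nt ∪ tp : Set TT) := Cardinal.mk_le_mk_of_subset hcover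
    _ ≤ #nt + #tp := Cardinal.mk_union_le _ _
    _ ≤ Cardinal.aleph 1 + Cardinal.aleph 1 :=
        add_le_add hnt1 (htp1.trans (by
          have : (1 : Cardinal) ≤ ℵ₀ := le_of_lt Cardinal.one_lt_aleph0
          exact this.trans (Cardinal.aleph0_le_aleph 1)))
    _ = Cardinal.aleph 1 := Cardinal.add_eq_self (Cardinal.aleph0_le_aleph 1)



/-! ### No 0-homogeneous set of size `ℵ₂` -/

lemma zero_side (hCH : (2 : Cardinal.{u}) ^ ℵ₀ = Cardinal.aleph 1)
    (P : Pack.{u}) (X : Set TT)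
    (h0 : ∀ x ∈ X, ∀ y ∈ X, x ≠ y → cc P x y = 0) : #X ≠ Cardinal.aleph 2 := by
  classical
  intro hX
  have finj : Function.Injective P.f := P.f.injective
  have hXne : X.Nonempty := by
    rw [← Set.nonempty_coe_sort, ← Cardinal.mk_ne_zero_iff, hX]
    exact (Cardinal.aleph_pos 2).ne'
  obtain ⟨x₀, hx₀⟩ := hXne
  -- fibers of restrictions, and their minima
  set Xfib : VV.{u} → Set TT :=
    fun i => {x ∈ X | ∀ γ : {γ : O1 // γ ≤ i.1}, P.f x γ.1 = i.2 γ} with hXfib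
  set fibmin : VV.{u} → TT := fun i => if H : (Xfib i).Nonempty then H.some else x₀ with hfibmin
  have fibmin_mem : ∀ i, (Xfib i).Nonempty → fibmin i ∈ Xfib i := by
    intro i H
    rw [hfibmin]
    simp only
    rw [dif_pos H]
    exact H.some_mem
  obtain ⟨t₀, ht₀⟩ := small_bounded (mk_VV hCH) fibmin
  -- the low part of X
  set Astar : Set TT := X ∩ {x | x < t₀} with hAstar
  have hAsub : Astar ⊆ X := Set.inter_subset_left
  have hAne : Astar.Nonempty := by
    set i₀ : VV := ⟨Classical.arbitrary O1, fun γ => P.f x₀ γ.1⟩ with hi₀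
    have hne : (Xfib i₀).Nonempty := ⟨x₀, hx₀, fun γ => rfl⟩
    exact ⟨fibmin i₀, (fibmin_mem i₀ hne).1, ht₀ i₀⟩
  have hAcard : #Astar ≤ Cardinal.aleph 1 :=
    (Cardinal.mk_le_mk_of_subset Set.inter_subset_right).trans (mk_Iio_TT t₀)
  obtain ⟨ζs, hζs⟩ := exists_index P hAne hAcard
  set t₂ := max t₀ ζs with ht₂
  set Xh : Set TT := {y ∈ X | t₂ < y} with hXh
  have hXhsub : Xh ⊆ X := fun y hy => hy.1
  have hXhcard : #Xh = Cardinal.aleph 2 := by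
    have hsub : X ⊆ Xh ∪ {x : TT | x ≤ t₂} := by
      intro x hx
      rcases le_or_gt x t₂ with h | h
      · exact Or.inr h
      · exact Or.inl ⟨hx, h⟩
    refine le_antisymm ((Cardinal.mk_le_mk_of_subset hXhsub).trans hX.le) ?_
    by_contra hne
    push_neg at hne
    have hle : #Xh ≤ Cardinal.aleph 1 := lt_aleph2.1 hne
    have h1 : Cardinal.aleph 2 ≤ Cardinal.aleph 1 := by
      calc Cardinal.aleph 2 = #X := hX.symm
        _ ≤ #((Xh ∪ {x : TT | x ≤ t₂} : Set TT)) := Cardinal.mk_le_mk_of_subset hsub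
        _ ≤ #Xh + #({x : TT | x ≤ t₂}) := Cardinal.mk_union_le _ _
        _ ≤ Cardinal.aleph 1 + Cardinal.aleph 1 := add_le_add hle (mk_Iic_TT t₂)
        _ = Cardinal.aleph 1 := Cardinal.add_eq_self (Cardinal.aleph0_le_aleph 1)
    exact absurd h1 (not_le.2 (Cardinal.aleph_lt_aleph.2 one_lt_two))
  -- main case split: is there a stage in Xh with unbounded splits over Astar?
  by_cases hcase : ∃ y ∈ Xh, ∀ v : O1, ∃ x, x ∈ Astar ∧ x < y ∧
      lexLt (P.f y) (P.f x) ∧ v < DD (P.f y) (P.f x)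
  · -- served case : a 1-colored pair inside X
    obtain ⟨y, hyXh, hy⟩ := hcase
    have hζy : ζs < y := lt_of_le_of_lt (le_max_right t₀ ζs) hyXh.2
    obtain ⟨x, hxA, hxy, hlex, hDgt⟩ := hy (ey y ⟨ζs, hζy⟩)
    have hcand : (cand P y ζs hζy).Nonempty :=
      ⟨x, hxy, (by rw [hζs]; exact hxA), hlex, hDgt⟩
    have hwmem : wit P y ζs hζy ∈ Ey P y := ⟨ζs, hζy, hcand, rfl⟩
    have hwc : wit P y ζs hζy ∈ cand P y ζs hζy := by
      rw [wit, dif_pos hcand]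
      exact hcand.some_mem
    have hwA : wit P y ζs hζy ∈ Astar := by
      rw [← hζs]; exact hwc.2.1
    have h1 : cc P (wit P y ζs hζy) y = 1 := cc_eq_one_of P hwc.1 hwmem
    have h2 : cc P (wit P y ζs hζy) y = 0 :=
      h0 _ (hAsub hwA) y (hXhsub hyXh) (ne_of_lt hwc.1)
    rw [h1] at h2
    exact absurd h2 (by decide)
  · -- bounded case : extract an aligned set of size ℵ₂ and contradict Lemma A
    push_neg at hcase
    have hbnd : ∀ y : TT, ∃ v : O1, y ∈ Xh → ∀ x, x ∈ Astar → x < y →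
        lexLt (P.f y) (P.f x) → DD (P.f y) (P.f x) ≤ v := by
      intro y
      by_cases hy : y ∈ Xh
      · obtain ⟨v, hv⟩ := hcase y hy
        exact ⟨v, fun _ x hxA hxy hlex => hv x hxA hxy hlex⟩
      · exact ⟨Classical.arbitrary O1, fun h => absurd h hy⟩
    choose σfun hσ using hbnd
    -- first stabilization : the bound
    obtain ⟨σ₀, hσ₀⟩ := stab (le_of_eq mk_O1) Xh hXhcard σfun
    set X1 : Set TT := {y ∈ Xh | σfun y = σ₀} with hX1
    -- second stabilization : the restriction up to σ₀
    set g2 : TT → ({γ : O1 // γ ≤ σ₀} → Bool) := fun y γ => P.f y γ.1 with hg2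
    have hWcard : #({γ : O1 // γ ≤ σ₀} → Bool) ≤ Cardinal.aleph 1 := by
      have h3 : #({γ : O1 // γ ≤ σ₀} → Bool) = (2 : Cardinal) ^ #{γ : O1 // γ ≤ σ₀} := by
        rw [Cardinal.mk_arrow, Cardinal.mk_bool, Cardinal.lift_two, Cardinal.lift_uzero]
      rw [h3]
      calc (2 : Cardinal) ^ #{γ : O1 // γ ≤ σ₀} ≤ (2 : Cardinal) ^ ℵ₀ :=
            Cardinal.power_le_power_left (by norm_num) (mk_Iic_O1 σ₀)
        _ = Cardinal.aleph 1 := hCH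
    obtain ⟨ρ₀, hρ₀⟩ := stab hWcard X1 hσ₀ g2
    set Xs : Set TT := {y ∈ X1 | g2 y = ρ₀} with hXsdef
    have hXsX : Xs ⊆ X := fun y hy => hXhsub hy.1.1
    -- alignment on Xs
    have halign : ∀ y ∈ Xs, ∀ y' ∈ Xs, y < y' → lexLt (P.f y) (P.f y') := by
      intro y hy y' hy' hlt
      have hfne : P.f y ≠ P.f y' := fun e => (ne_of_lt hlt) (finj e)
      rcases lexLt_total hfne with hgood | hbad
      · exact hgood
      exfalso
      set D := DD (P.f y') (P.f y) with hD
      have hrestr : ∀ γ : {γ : O1 // γ ≤ σ₀}, P.f y γ.1 = P.f y' γ.1 := by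
        intro γ
        have e1 : g2 y γ = ρ₀ γ := congrFun hy.2 γ
        have e2 : g2 y' γ = ρ₀ γ := congrFun hy'.2 γ
        exact e1.trans e2.symm
      have hσlt : σ₀ < D := by
        by_contra hle
        push_neg at hle
        exact (DD_mem hfne.symm) (hrestr ⟨D, hle⟩).symm
      have hd' : P.f y' D = false := hbad.2.1
      have hd : P.f y D = true := hbad.2.2
      set i : VV := ⟨D, fun γ => P.f y γ.1⟩ with hi
      have hfib : (Xfib i).Nonempty := ⟨y, hXsX hy, fun γ => rfl⟩
      set x := fibmin i with hx
      have hxmem := fibmin_mem i hfib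
      have hxX : x ∈ X := hxmem.1
      have hxr : ∀ γ : {γ : O1 // γ ≤ D}, P.f x γ.1 = P.f y γ.1 := hxmem.2
      have hxt₀ : x < t₀ := ht₀ i
      have hxA : x ∈ Astar := ⟨hxX, hxt₀⟩
      have hxy' : x < y' :=
        lt_trans (lt_of_lt_of_le hxt₀ (le_max_left t₀ ζs)) hy'.1.1.2
      have hagree : ∀ γ, γ < D → P.f y' γ = P.f x γ := by
        intro γ hγ
        have h1 : P.f y' γ = P.f y γ := DD_agree hfne.symm hγ
        have h2 : P.f x γ = P.f y γ := hxr ⟨γ, hγ.le⟩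
        rw [h1, ← h2]
      have hdx : P.f x D = true := by
        have := hxr ⟨D, le_rfl⟩
        rw [this]
        exact hd
      have hne2 : P.f y' D ≠ P.f x D := by
        rw [hd', hdx]
        simp
      have hDeq : DD (P.f y') (P.f x) = D := DD_unique hagree hne2
      have hlex2 : lexLt (P.f y') (P.f x) :=
        ⟨fun e => hne2 (congrFun e D), by rw [hDeq]; exact hd', by rw [hDeq]; exact hdx⟩
      have hbod := hσ y' hy'.1.1 x hxA hxy' hlex2
      rw [hDeq] at hbod
      have hσy' : σfun y' = σ₀ := hy'.1.2
      rw [hσy'] at hbod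
      exact absurd hbod (not_le.2 hσlt)
    have hA := lemA hCH (⇑P.f) Xs halign
    rw [hρ₀] at hA
    exact absurd hA (not_le.2 (Cardinal.aleph_lt_aleph.2 one_lt_two))



/-! ### No 1-homogeneous set of order type `ω₁ + 2` -/

lemma one_side (P : Pack.{u}) (Y : Set TT)
    (h1 : ∀ x ∈ Y, ∀ y ∈ Y, x ≠ y → cc P x y = 1) :
    Ordinal.type ((· < ·) : Y → Y → Prop) ≠ (Cardinal.aleph 1).ord + 2 := by
  classical
  intro hY
  set o₂ : Ordinal := (Cardinal.aleph 1).ord + 2 with ho₂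
  haveI : IsWellOrder o₂.ToType ((· < ·) : o₂.ToType → o₂.ToType → Prop) := isWellOrder_lt
  haveI : IsWellOrder (↥Y) ((· < ·) : Y → Y → Prop) := isWellOrder_lt
  have htype : Ordinal.type ((· < ·) : Y → Y → Prop)
      = Ordinal.type ((· < ·) : o₂.ToType → o₂.ToType → Prop) := by
    rw [Ordinal.type_toType]
    exact hY
  obtain ⟨φ⟩ := Ordinal.type_eq.1 htype
  set ι := Ordinal.ToType.mk (o := o₂) with hι
  set el : Set.Iio o₂ → Y := fun p => φ.symm (ι p) with hel
  have el_mono : ∀ p q : Set.Iio o₂, p < q → ((el p : TT) < (el q : TT)) := by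
    intro p q hpq
    have h2 : (ι p) < (ι q) := ι.lt_iff_lt.2 hpq
    exact Subtype.coe_lt_coe.2 (φ.symm.map_rel_iff.2 h2)
  have el_inj : Function.Injective el := fun p q h =>
    ι.injective (φ.symm.injective h)
  -- the distinguished points
  have h2pos : (0 : Ordinal) < 2 := by norm_num
  have h12 : (1 : Ordinal) < 2 := by norm_num
  have hωlt : (Cardinal.aleph 1).ord < o₂ := by
    rw [ho₂]
    conv_lhs => rw [← add_zero (Cardinal.aleph 1).ord]
    exact (add_lt_add_iff_left _).2 h2pos
  have hω1lt : (Cardinal.aleph 1).ord + 1 < o₂ := (add_lt_add_iff_left _).2 h12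
  set s : Y := el ⟨(Cardinal.aleph 1).ord, hωlt⟩ with hs
  set s' : Y := el ⟨(Cardinal.aleph 1).ord + 1, hω1lt⟩ with hs'
  have hss' : (s : TT) < (s' : TT) := by
    apply el_mono
    exact Subtype.mk_lt_mk.2 (lt_add_one _)
  -- the ω₁-many points below
  have hq : ∀ b : O1, Ordinal.typein ((· < ·) : O1 → O1 → Prop) b < o₂ :=
    fun b => lt_trans (Ordinal.typein_lt_self b) hωlt
  set xb : O1 → Y := fun b => el ⟨Ordinal.typein ((· < ·) : O1 → O1 → Prop) b, hq b⟩ with hxb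
  have hxb_lt_s : ∀ b, (xb b : TT) < (s : TT) := by
    intro b
    apply el_mono
    exact Subtype.mk_lt_mk.2 (Ordinal.typein_lt_self b)
  have hxb_lt_s' : ∀ b, (xb b : TT) < (s' : TT) := fun b => lt_trans (hxb_lt_s b) hss'
  have hxb_inj : Function.Injective xb := by
    intro b b' h
    have := el_inj h
    exact Ordinal.typein_injective _ (congrArg Subtype.val this)
  -- colors
  have hcols' : (s : TT) ∈ Ey P (s' : TT) :=
    mem_Ey_of_cc P hss' (h1 _ s.2 _ s'.2 (ne_of_lt hss'))
  have hcolb' : ∀ b, (xb b : TT) ∈ Ey P (s' : TT) := fun b =>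
    mem_Ey_of_cc P (hxb_lt_s' b) (h1 _ (xb b).2 _ s'.2 (ne_of_lt (hxb_lt_s' b)))
  have hcolb : ∀ b, (xb b : TT) ∈ Ey P (s : TT) := fun b =>
    mem_Ey_of_cc P (hxb_lt_s b) (h1 _ (xb b).2 _ s.2 (ne_of_lt (hxb_lt_s b)))
  -- lex facts
  have hles : lexLt (P.f s') (P.f s) := (mem_Ey P hcols').2.1
  set estar : O1 := DD (P.f s') (P.f s) with hestar
  have hlexb : ∀ b, lexLt (P.f s) (P.f (xb b)) := fun b => (mem_Ey P (hcolb b)).2.1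
  have hlexb' : ∀ b, lexLt (P.f s') (P.f (xb b)) := fun b => (mem_Ey P (hcolb' b)).2.1
  have hDle : ∀ b, DD (P.f s') (P.f (xb b)) ≤ estar := fun b =>
    DD_le_sandwich hles (hlexb b) (hlexb' b).1
  -- witnesses data
  have hwdata : ∀ b : O1, ∃ ζ : TT, ∃ h : ζ < (s' : TT),
      wit P (s' : TT) ζ h = (xb b : TT) ∧
        ey (s' : TT) ⟨ζ, h⟩ < DD (P.f (s' : TT)) (P.f (xb b : TT)) :=
    fun b => (mem_Ey P (hcolb' b)).2.2
  choose ζb hζb hwitb heyb using hwdata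
  -- the injection of O1 into a countable set
  set J : O1 → {v : O1 // v < estar} := fun b =>
    ⟨ey (s' : TT) ⟨ζb b, hζb b⟩, lt_of_lt_of_le (heyb b) (hDle b)⟩ with hJ
  have hJinj : Function.Injective J := by
    intro b b' h
    have h1' : ey (s' : TT) ⟨ζb b, hζb b⟩ = ey (s' : TT) ⟨ζb b', hζb b'⟩ :=
      congrArg Subtype.val h
    have h2' : (⟨ζb b, hζb b⟩ : {x : TT // x < (s' : TT)}) = ⟨ζb b', hζb b'⟩ :=
      (ey (s' : TT)).injective h1'
    have h3' : ζb b = ζb b' := congrArg Subtype.val h2'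
    have h4' : (xb b : TT) = (xb b' : TT) := by
      rw [← hwitb b, ← hwitb b']
      congr 1
    exact hxb_inj (Subtype.ext h4')
  have hcard : #O1 ≤ #{v : O1 // v < estar} := Cardinal.mk_le_of_injective hJinj
  rw [mk_O1] at hcard
  have : Cardinal.aleph 1 ≤ ℵ₀ := hcard.trans (mk_Iio_O1 estar)
  have h0 : ℵ₀ < Cardinal.aleph 1 := by
    rw [← Cardinal.aleph_zero]
    exact Cardinal.aleph_lt_aleph.2 zero_lt_one
  exact absurd this (not_le.2 h0)


end ERNeg

end

/-- **Erdős–Rado negative result**: assuming `2^ω = ω₁` and `2^{ω₁} = ω₂`, we have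
`ω₂ ↛ (ω₂, ω₁+2)²`. -/
theorem omega2_negative_omega1_add_two
    (hCH : (2 : Cardinal.{0}) ^ ℵ₀ = Cardinal.aleph 1)
    (hCH1 : (2 : Cardinal.{0}) ^ Cardinal.aleph 1 = Cardinal.aleph 2) :
    ∃ c : (Cardinal.aleph 2).ord.ToType → (Cardinal.aleph 2).ord.ToType → Fin 2,
      (∀ x y, c x y = c y x) ∧
      (∀ X : Set (Cardinal.aleph 2).ord.ToType,
        (∀ x ∈ X, ∀ y ∈ X, x ≠ y → c x y = 0) → #X ≠ Cardinal.aleph 2) ∧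
      (∀ Y : Set (Cardinal.aleph 2).ord.ToType,
        (∀ x ∈ Y, ∀ y ∈ Y, x ≠ y → c x y = 1) →
          setOType Y ≠ (Cardinal.aleph 1).ord + 2) := by
  have hCH' : (2 : Cardinal) ^ (ℵ₀ : Cardinal) = Cardinal.aleph 1 := by
    have := congrArg Cardinal.lift.{_, 0} hCH
    rwa [Cardinal.lift_power, Cardinal.lift_two, Cardinal.lift_aleph0,
      Cardinal.lift_aleph, Ordinal.lift_one] at this
  have hCH1' : (2 : Cardinal) ^ Cardinal.aleph 1 = Cardinal.aleph 2 := by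
    have := congrArg Cardinal.lift.{_, 0} hCH1
    rwa [Cardinal.lift_power, Cardinal.lift_two, Cardinal.lift_aleph, Cardinal.lift_aleph,
      Ordinal.lift_one, Ordinal.lift_ofNat] at this
  obtain ⟨P⟩ := ERNeg.pack_exists hCH1'
  refine ⟨ERNeg.cc P, ERNeg.cc_symm P, ?_, ?_⟩
  · exact fun X hX => ERNeg.zero_side hCH' P X hX
  · exact fun Y hY => ERNeg.one_side P Y hY
end
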